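/- arXiv:1210.4707 — 12 statements merged into one kernel-verified Lean document; each statement's English description precedes it below -/
import Mathlib

section
/- With the setup of a boundary pair (Γ, G) for a closed non-negative form h, the quadratic form l on G defined by l(φ) := ‖Sφ‖²_{H¹} with domain ran Γ is a closed quadratic form in G, and it satisfies the lower bound l(φ) ≥ ‖Γ‖⁻²_{H¹→G} · ‖φ‖²_G for all φ ∈ ran Γ. -/
/-- For a boundary pair `(Γ, G)` associated with a closed non-negative
form `h` (form domain `H¹`, embedded in `H` via `J`), the quadratic form
`l(φ) := ‖Sφ‖²_{H¹}` with domain `ran Γ` is a closed quadratic form in `G`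
and satisfies the lower bound `l(φ) ≥ ‖Γ‖⁻² ‖φ‖²_G` for all `φ ∈ ran Γ`.
Closedness is expressed by: every sequence in `ran Γ` which is Cauchy with respect to
the form norm `φ ↦ ‖Sφ‖_{H¹}` and converges in `G` has its limit in `ran Γ`, with
convergence in the form norm. -/
theorem dtn_form_closed_and_lower_bound
    {H H1 G : Type*}
    [NormedAddCommGroup H] [InnerProductSpace ℂ H] [CompleteSpace H]
    [NormedAddCommGroup H1] [InnerProductSpace ℂ H1] [CompleteSpace H1]
    [NormedAddCommGroup G] [InnerProductSpace ℂ G] [CompleteSpace G]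
    (J : H1 →L[ℂ] H) (hJinj : Function.Injective J) (hJdense : DenseRange J)
    (Γ : H1 →L[ℂ] G)
    (hker : Dense (J '' ((LinearMap.ker (Γ : H1 →ₗ[ℂ] G) : Submodule ℂ H1) : Set H1)))
    (hran : Dense ((LinearMap.range (Γ : H1 →ₗ[ℂ] G) : Submodule ℂ G) : Set G))
    (S : (LinearMap.range (Γ : H1 →ₗ[ℂ] G) : Submodule ℂ G) →ₗ[ℂ] H1)
    (hS1 : ∀ φ : (LinearMap.range (Γ : H1 →ₗ[ℂ] G) : Submodule ℂ G), S φ ∈ (LinearMap.ker (Γ : H1 →ₗ[ℂ] G))ᗮ)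
    (hS2 : ∀ φ : (LinearMap.range (Γ : H1 →ₗ[ℂ] G) : Submodule ℂ G), Γ (S φ) = (φ : G)) :
    -- lower bound `l(φ) = ‖Sφ‖²_{H¹} ≥ ‖Γ‖⁻² ‖φ‖²_G`
    (∀ φ : (LinearMap.range (Γ : H1 →ₗ[ℂ] G) : Submodule ℂ G),
      (‖Γ‖⁻¹) ^ 2 * ‖(φ : G)‖ ^ 2 ≤ ‖S φ‖ ^ 2) ∧
    -- closedness of the form `l`
    (∀ (φ : ℕ → (LinearMap.range (Γ : H1 →ₗ[ℂ] G) : Submodule ℂ G)) (ψ : G),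
      CauchySeq (fun n => S (φ n)) →
      Filter.Tendsto (fun n => ((φ n : G))) Filter.atTop (nhds ψ) →
      ∃ φ' : (LinearMap.range (Γ : H1 →ₗ[ℂ] G) : Submodule ℂ G), (φ' : G) = ψ ∧
        Filter.Tendsto (fun n => S (φ n)) Filter.atTop (nhds (S φ'))) := by
  constructor
  · intro φ
    have h1 : ‖(φ : G)‖ ≤ ‖Γ‖ * ‖S φ‖ := by
      rw [← hS2 φ]; exact Γ.le_opNorm _
    rcases eq_or_lt_of_le (norm_nonneg Γ) with h0 | h0
    · simp [← h0]
    · rw [inv_pow, inv_mul_le_iff₀ (by positivity)]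
      calc ‖(φ : G)‖ ^ 2 ≤ (‖Γ‖ * ‖S φ‖) ^ 2 := by
            exact pow_le_pow_left₀ (norm_nonneg _) h1 2
        _ = ‖Γ‖ ^ 2 * ‖S φ‖ ^ 2 := by ring
  · intro φ ψ hc hlim
    obtain ⟨f, hf⟩ := cauchySeq_tendsto_of_complete hc
    have hΓf : Γ f = ψ := by
      have h1 : Filter.Tendsto (fun n => Γ (S (φ n))) Filter.atTop (nhds (Γ f)) :=
        (Γ.continuous.tendsto f).comp hf
      simp only [hS2] at h1
      exact tendsto_nhds_unique h1 hlim
    refine ⟨⟨ψ, f, hΓf⟩, rfl, ?_⟩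
    have hfmem : f ∈ (LinearMap.ker (Γ : H1 →ₗ[ℂ] G))ᗮ :=
      (Submodule.isClosed_orthogonal _).mem_of_tendsto hf
        (Filter.Eventually.of_forall fun n => hS1 (φ n))
    have : S ⟨ψ, f, hΓf⟩ = f := by
      have hdiff : S ⟨ψ, f, hΓf⟩ - f ∈ LinearMap.ker (Γ : H1 →ₗ[ℂ] G) := by
        rw [LinearMap.mem_ker, map_sub]; simp [hS2, hΓf]
      have hdiff2 : S ⟨ψ, f, hΓf⟩ - f ∈ (LinearMap.ker (Γ : H1 →ₗ[ℂ] G))ᗮ :=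
        Submodule.sub_mem _ (hS1 _) hfmem
      have hz := Submodule.disjoint_def.mp (Submodule.orthogonal_disjoint _) _ hdiff hdiff2
      exact sub_eq_zero.mp hz
    rw [this]; exact hf
end

section
/- Let (Γ, G) be a boundary pair for the form h and Λ its Dirichlet-to-Neumann operator at z = −1 (the operator associated with the form l(φ) = ‖Sφ‖²_{H¹}). Then the boundary map Γ is surjective (ran Γ = G) if and only if Λ is a bounded operator. -/
/-- For a boundary pair `(Γ, G)` with Dirichlet solution operator `S`
and Dirichlet-to-Neumann operator `Λ` at `z = -1` (the self-adjoint operator associated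
with the closed form `l(φ) = ‖Sφ‖²_{H¹}` on `ran Γ`), the boundary map `Γ` is surjective
(`ran Γ = G`) if and only if `Λ` is a bounded (everywhere defined) operator. -/
theorem boundary_map_surjective_iff_dtn_bounded
    {H H1 G : Type*}
    [NormedAddCommGroup H] [InnerProductSpace ℂ H] [CompleteSpace H]
    [NormedAddCommGroup H1] [InnerProductSpace ℂ H1] [CompleteSpace H1]
    [NormedAddCommGroup G] [InnerProductSpace ℂ G] [CompleteSpace G]
    (J : H1 →L[ℂ] H) (hJinj : Function.Injective J) (hJdense : DenseRange J)
    (Γ : H1 →L[ℂ] G)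
    (hker : Dense (J '' ((LinearMap.ker (Γ : H1 →ₗ[ℂ] G) : Submodule ℂ H1) : Set H1)))
    (hran : Dense ((LinearMap.range (Γ : H1 →ₗ[ℂ] G) : Submodule ℂ G) : Set G))
    (S : (LinearMap.range (Γ : H1 →ₗ[ℂ] G) : Submodule ℂ G) →ₗ[ℂ] H1)
    (hS1 : ∀ φ : (LinearMap.range (Γ : H1 →ₗ[ℂ] G) : Submodule ℂ G), S φ ∈ (LinearMap.ker (Γ : H1 →ₗ[ℂ] G))ᗮ)
    (hS2 : ∀ φ : (LinearMap.range (Γ : H1 →ₗ[ℂ] G) : Submodule ℂ G), Γ (S φ) = (φ : G))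
    -- `Λ` is the operator associated with the closed form `l(φ,ψ) = ⟨Sφ, Sψ⟩_{H¹}`
    (Λ : G →ₗ.[ℂ] G)
    (hΛdom : ∀ φ : Λ.domain, ∃ hm : (φ : G) ∈ LinearMap.range (Γ : H1 →ₗ[ℂ] G),
      ∀ ψ : (LinearMap.range (Γ : H1 →ₗ[ℂ] G) : Submodule ℂ G),
        (inner ℂ (S ψ) (S ⟨(φ : G), hm⟩) : ℂ) = inner ℂ (ψ : G) (Λ φ))
    (hΛmax : ∀ (φ : (LinearMap.range (Γ : H1 →ₗ[ℂ] G) : Submodule ℂ G)) (w : G),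
      (∀ ψ : (LinearMap.range (Γ : H1 →ₗ[ℂ] G) : Submodule ℂ G),
        (inner ℂ (S ψ) (S φ) : ℂ) = inner ℂ (ψ : G) w) → (φ : G) ∈ Λ.domain)
    (hΛsym : ∀ u v : Λ.domain, (inner ℂ (Λ u) ((v : G)) : ℂ) = inner ℂ ((u : G)) (Λ v)) :
    LinearMap.range (Γ : H1 →ₗ[ℂ] G) = ⊤ ↔
      (Λ.domain = ⊤ ∧ ∃ C : ℝ, ∀ φ : Λ.domain, ‖Λ φ‖ ≤ C * ‖(φ : G)‖) := by
  constructor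
  · intro hsurj
    -- the everywhere-defined Dirichlet solution operator
    have hmemG : ∀ g : G, g ∈ LinearMap.range (Γ : H1 →ₗ[ℂ] G) := fun g => hsurj ▸ Submodule.mem_top
    set T : G →ₗ[ℂ] H1 :=
      { toFun := fun g => S ⟨g, hmemG g⟩
        map_add' := by
          intro a b
          rw [← map_add]
          rfl
        map_smul' := by
          intro c a
          rw [← map_smul]
          rfl } with hT
    have hTS : ∀ φ : (LinearMap.range (Γ : H1 →ₗ[ℂ] G) : Submodule ℂ G), T (φ : G) = S φ := by
      intro φ
      simp only [hT, LinearMap.coe_mk, AddHom.coe_mk]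
    have hT1 : ∀ g : G, T g ∈ (LinearMap.ker (Γ : H1 →ₗ[ℂ] G))ᗮ := fun g => hS1 _
    have hT2 : ∀ g : G, Γ (T g) = g := fun g => hS2 _
    -- uniqueness of the Dirichlet solution
    have huniq : ∀ a b : H1, a ∈ (LinearMap.ker (Γ : H1 →ₗ[ℂ] G))ᗮ → b ∈ (LinearMap.ker (Γ : H1 →ₗ[ℂ] G))ᗮ →
        Γ a = Γ b → a = b := by
      intro a b ha hb hab
      have hmem : a - b ∈ (LinearMap.ker (Γ : H1 →ₗ[ℂ] G))ᗮ := Submodule.sub_mem _ ha hb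
      have hker' : a - b ∈ LinearMap.ker (Γ : H1 →ₗ[ℂ] G) := by
        simp [LinearMap.mem_ker, map_sub, hab]
      have h0 : (inner ℂ (a - b) (a - b) : ℂ) = 0 :=
        (Submodule.mem_orthogonal _ _).mp hmem _ hker'
      rw [inner_self_eq_zero] at h0
      exact sub_eq_zero.mp h0
    -- `T` is continuous by the closed graph theorem
    have hTcont : Continuous T := by
      apply T.continuous_of_seq_closed_graph
      intro u x y hu hTu
      have hy : y ∈ (LinearMap.ker (Γ : H1 →ₗ[ℂ] G))ᗮ :=
        (LinearMap.ker (Γ : H1 →ₗ[ℂ] G)).isClosed_orthogonal.mem_of_tendsto hTu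
          (Filter.Eventually.of_forall fun n => hT1 (u n))
      have hΓy : Γ y = x := by
        have h1 : Filter.Tendsto (fun n => Γ ((T ∘ u) n)) Filter.atTop (nhds (Γ y)) :=
          (Γ.continuous.tendsto y).comp hTu
        have h2 : (fun n => Γ ((T ∘ u) n)) = u := by
          funext n; exact hT2 (u n)
        rw [h2] at h1
        exact tendsto_nhds_unique h1 hu
      exact huniq y (T x) hy (hT1 x) (by rw [hΓy, hT2])
    set Tc : G →L[ℂ] H1 := ⟨T, hTcont⟩ with hTc
    -- everywhere defined
    have hdom : ∀ g : G, g ∈ Λ.domain := by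
      intro g
      set φ : (LinearMap.range (Γ : H1 →ₗ[ℂ] G) : Submodule ℂ G) := ⟨g, hmemG g⟩ with hφ
      set f : G →L[ℂ] ℂ := (innerSL ℂ (S φ)).comp Tc with hf
      set w : G := (InnerProductSpace.toDual ℂ G).symm f with hw
      have key : ∀ ψ : (LinearMap.range (Γ : H1 →ₗ[ℂ] G) : Submodule ℂ G),
          (inner ℂ (S ψ) (S φ) : ℂ) = inner ℂ (ψ : G) w := by
        intro ψ
        have h1 : (inner ℂ w ((ψ : G)) : ℂ) = f (ψ : G) :=
          InnerProductSpace.toDual_symm_apply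
        have h2 : f (ψ : G) = inner ℂ (S φ) (S ψ) := by
          simp only [hf, ContinuousLinearMap.comp_apply, innerSL_apply_apply]
          rw [show Tc (ψ : G) = T (ψ : G) from rfl, hTS]
        calc (inner ℂ (S ψ) (S φ) : ℂ)
            = starRingEnd ℂ (inner ℂ (S φ) (S ψ)) := (inner_conj_symm _ _).symm
          _ = starRingEnd ℂ (inner ℂ w ((ψ : G))) := by rw [h1, h2]
          _ = inner ℂ ((ψ : G)) w := inner_conj_symm _ _
      exact hΛmax φ w key
    refine ⟨Submodule.eq_top_iff'.mpr hdom, ‖Tc‖ * ‖Tc‖, ?_⟩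
    -- the norm bound
    intro φd
    obtain ⟨hm, hprop⟩ := hΛdom φd
    have h1 := hprop ⟨Λ φd, hmemG _⟩
    have hb : ‖Λ φd‖ * ‖Λ φd‖ ≤ (‖Tc‖ * ‖Λ φd‖) * (‖Tc‖ * ‖((φd : G))‖) := by
      have e1 : ‖Λ φd‖ * ‖Λ φd‖ = RCLike.re (inner ℂ (Λ φd) (Λ φd) : ℂ) :=
        (inner_self_eq_norm_mul_norm _).symm
      rw [e1, ← h1]
      calc RCLike.re (inner ℂ (S ⟨Λ φd, hmemG _⟩) (S ⟨(φd : G), hm⟩) : ℂ)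
          ≤ ‖(inner ℂ (S ⟨Λ φd, hmemG _⟩) (S ⟨(φd : G), hm⟩) : ℂ)‖ := RCLike.re_le_norm _
        _ ≤ ‖S (⟨Λ φd, hmemG _⟩ : (LinearMap.range (Γ : H1 →ₗ[ℂ] G) : Submodule ℂ G))‖ *
              ‖S (⟨(φd : G), hm⟩ : (LinearMap.range (Γ : H1 →ₗ[ℂ] G) : Submodule ℂ G))‖ :=
            norm_inner_le_norm _ _
        _ ≤ (‖Tc‖ * ‖Λ φd‖) * (‖Tc‖ * ‖((φd : G))‖) := by
            apply mul_le_mul _ _ (norm_nonneg _) (by positivity)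
            · rw [← hTS ⟨Λ φd, hmemG _⟩]
              exact Tc.le_opNorm _
            · rw [← hTS ⟨(φd : G), hm⟩]
              exact Tc.le_opNorm _
    rcases eq_or_lt_of_le (norm_nonneg (Λ φd)) with h0 | h0
    · rw [← h0]
      positivity
    · have := hb
      rw [show (‖Tc‖ * ‖Λ φd‖) * (‖Tc‖ * ‖((φd : G))‖)
          = (‖Tc‖ * ‖Tc‖ * ‖((φd : G))‖) * ‖Λ φd‖ by ring] at this
      exact le_of_mul_le_mul_right (by linarith [this]) h0
  · rintro ⟨hdom, -⟩
    rw [eq_top_iff]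
    intro g _
    obtain ⟨hm, -⟩ := hΛdom ⟨g, hdom ▸ Submodule.mem_top⟩
    exact hm
end

section
/- Let (Γ, G) be a boundary pair for h, with Dirichlet operator H^D (the operator associated with h restricted to ker Γ, acting in the closure of ker Γ in H). For z ∈ ℂ not in spec(H^D), define the weak solution space L¹(z) = {u ∈ H¹ : h(u,f) − z⟨u,f⟩_H = 0 for all f ∈ ker Γ}. Then H¹ decomposes as the direct (topological) sum H¹ = ker Γ ∔ L¹(z), and the sum is orthogonal when z = −1. -/
/-- `R` is a (bounded, everywhere defined, two-sided) resolvent of the (possibly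
unbounded) operator `T` at the spectral point `z`, witnessing `z ∉ spec T`. -/
def ResolventAt {E : Type*} [NormedAddCommGroup E] [NormedSpace ℂ E]
    (T : E →ₗ.[ℂ] E) (z : ℂ) (R : E →L[ℂ] E) : Prop :=
  (∀ x : E, ∃ hx : R x ∈ T.domain, T ⟨R x, hx⟩ - z • R x = x) ∧
  ∀ u : T.domain, R (T u - z • (u : E)) = (u : E)

/-- Let `(Γ, G)` be a boundary pair for the form `h` (with sesquilinear
form `hform`, conjugate-linear in the first entry, related to the `H¹`- and `H`-inner
products by polarization), and let `HD` be the Dirichlet operator (the operator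
associated with `h` restricted to `ker Γ`).  For `z ∉ spec HD` (witnessed by a bounded
resolvent `R`), the form domain `H¹` decomposes as the direct topological sum
`H¹ = ker Γ ∔ L¹(z)`, where `L¹(z) = {u : h(u,f) = z⟨u,f⟩_H ∀ f ∈ ker Γ}` is the weak
solution space; the sum is orthogonal for `z = -1`. -/
theorem domain_decomposition_ker_and_weak_solutions
    {H H1 G : Type*}
    [NormedAddCommGroup H] [InnerProductSpace ℂ H] [CompleteSpace H]
    [NormedAddCommGroup H1] [InnerProductSpace ℂ H1] [CompleteSpace H1]
    [NormedAddCommGroup G] [InnerProductSpace ℂ G] [CompleteSpace G]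
    (J : H1 →L[ℂ] H) (hJinj : Function.Injective J) (hJdense : DenseRange J)
    -- the sesquilinear form `h` (conjugate-linear in the first argument), determined by
    -- `⟨u,v⟩_{H¹} = ⟨Ju, Jv⟩_H + h(u,v)`
    (hform : H1 → H1 → ℂ)
    (hpol : ∀ u v : H1, (inner ℂ u v : ℂ) = (inner ℂ (J u) (J v) : ℂ) + hform u v)
    (Γ : H1 →L[ℂ] G)
    (hker : Dense (J '' ((LinearMap.ker (Γ : H1 →ₗ[ℂ] G) : Submodule ℂ H1) : Set H1)))
    (hran : Dense ((LinearMap.range (Γ : H1 →ₗ[ℂ] G) : Submodule ℂ G) : Set G))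
    -- the Dirichlet operator `HD`, associated with `h` restricted to `ker Γ`
    (HD : H →ₗ.[ℂ] H)
    (hHDdom : ∀ u : HD.domain, ∃ u1 : H1, J u1 = (u : H) ∧ Γ u1 = 0 ∧
      ∀ f : H1, Γ f = 0 → hform f u1 = (inner ℂ (J f) (HD u) : ℂ))
    (hHDmax : ∀ (u1 : H1) (w : H), Γ u1 = 0 →
      (∀ f : H1, Γ f = 0 → hform f u1 = (inner ℂ (J f) w : ℂ)) →
      ∃ hu : J u1 ∈ HD.domain, HD ⟨J u1, hu⟩ = w)
    -- `z ∉ spec HD`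
    (z : ℂ) (R : H →L[ℂ] H) (hR : ResolventAt HD z R) :
    -- `ker Γ` and `L¹(z)` are closed subspaces of `H¹`
    IsClosed ((LinearMap.ker (Γ : H1 →ₗ[ℂ] G) : Submodule ℂ H1) : Set H1) ∧
    IsClosed {u : H1 | ∀ f : H1, Γ f = 0 → hform f u = z * (inner ℂ (J f) (J u) : ℂ)} ∧
    -- `H¹ = ker Γ + L¹(z)`
    (∀ u : H1, ∃ f w : H1, Γ f = 0 ∧
      (∀ g : H1, Γ g = 0 → hform g w = z * (inner ℂ (J g) (J w) : ℂ)) ∧ u = f + w) ∧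
    -- the sum is direct
    (∀ f w : H1, Γ f = 0 →
      (∀ g : H1, Γ g = 0 → hform g w = z * (inner ℂ (J g) (J w) : ℂ)) →
      f + w = 0 → f = 0 ∧ w = 0) ∧
    -- orthogonality (in `H¹`) for `z = -1`
    (z = -1 → ∀ f w : H1, Γ f = 0 →
      (∀ g : H1, Γ g = 0 → hform g w = z * (inner ℂ (J g) (J w) : ℂ)) →
      (inner ℂ f w : ℂ) = 0) := by
  
  have hf : ∀ u v : H1, hform u v = (inner ℂ u v : ℂ) - (inner ℂ (J u) (J v) : ℂ) := by
    intro u v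
    rw [hpol u v]; ring
  have hclosed1 : IsClosed ((LinearMap.ker (Γ : H1 →ₗ[ℂ] G) : Submodule ℂ H1) : Set H1) :=
    ContinuousLinearMap.isClosed_ker Γ
  have hclosed2 : IsClosed
      {u : H1 | ∀ f : H1, Γ f = 0 → hform f u = z * (inner ℂ (J f) (J u) : ℂ)} := by
    have hset : {u : H1 | ∀ f : H1, Γ f = 0 → hform f u = z * (inner ℂ (J f) (J u) : ℂ)} =
        ⋂ (f : H1) (_ : Γ f = 0),
          {u : H1 | (inner ℂ f u : ℂ) - (1 + z) * (inner ℂ (J f) (J u) : ℂ) = 0} := by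
      ext u
      simp only [Set.mem_iInter, Set.mem_setOf_eq]
      refine forall_congr' fun f => ?_
      refine imp_congr_right fun _ => ?_
      rw [hf f u]
      constructor <;> intro h <;> linear_combination h
    rw [hset]
    refine isClosed_iInter fun f => isClosed_iInter fun _ => ?_
    have hcont : Continuous fun u : H1 =>
        (inner ℂ f u : ℂ) - (1 + z) * (inner ℂ (J f) (J u) : ℂ) := by
      apply Continuous.sub
      · exact (innerSL ℂ f).continuous
      · exact continuous_const.mul ((innerSL ℂ (J f)).continuous.comp J.continuous)
    exact isClosed_eq hcont continuous_const
  refine ⟨hclosed1, hclosed2, ?_, ?_, ?_⟩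
  · -- decomposition
    intro u
    set K : Submodule ℂ H1 := LinearMap.ker (Γ : H1 →ₗ[ℂ] G) with hKdef
    haveI : CompleteSpace K := hclosed1.completeSpace_coe
    obtain ⟨f1, hf1K, hw1⟩ : ∃ f1 : H1, f1 ∈ K ∧ (u - f1) ∈ Kᗮ :=
      ⟨K.orthogonalProjectionOnto u, (K.orthogonalProjectionOnto u).2,
        K.sub_starProjection_mem_orthogonal u⟩
    obtain ⟨hx, hres⟩ := hR.1 ((-(z+1)) • (J (u - f1)))
    obtain ⟨g1, hg1J, hg1Γ, hg1form⟩ := hHDdom ⟨R ((-(z+1)) • (J (u - f1))), hx⟩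
    refine ⟨f1 + g1, u - (f1 + g1), ?_, ?_, by abel⟩
    · rw [map_add, hg1Γ, (show Γ f1 = 0 from LinearMap.mem_ker.mp hf1K), add_zero]
    · intro g hg
      have hgK : g ∈ K := LinearMap.mem_ker.mpr hg
      have hgw1 : (inner ℂ g (u - f1) : ℂ) = 0 :=
        (Submodule.mem_orthogonal K (u - f1)).mp hw1 g hgK
      have hDval : (HD ⟨R ((-(z+1)) • (J (u - f1))), hx⟩ : H) =
          (-(z+1)) • (J (u - f1)) + z • (R ((-(z+1)) • (J (u - f1)))) :=
        sub_eq_iff_eq_add.mp hres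
      have hg1J' : J g1 = R ((-(z+1)) • (J (u - f1))) := hg1J
      have hA1 : u - (f1 + g1) = (u - f1) - g1 := by abel
      have hJw : J ((u - f1) - g1) = J (u - f1) - R ((-(z+1)) • (J (u - f1))) := by
        rw [map_sub, hg1J']
      rw [hf g (u - (f1 + g1)), hA1, inner_sub_right, hgw1, hpol g g1,
        hg1form g hg, hDval, hg1J', hJw]
      simp only [inner_sub_right, inner_add_right, inner_smul_right]
      ring
  · -- directness
    intro f w hfΓ hwL hsum
    have hwf : w = -f := eq_neg_of_add_eq_zero_right hsum
    have hwΓ : Γ w = 0 := by rw [hwf, map_neg, hfΓ, neg_zero]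
    have hweak : ∀ g : H1, Γ g = 0 → hform g w = (inner ℂ (J g) (z • (J w)) : ℂ) := by
      intro g hg
      rw [inner_smul_right]
      exact hwL g hg
    obtain ⟨hu, hHDw⟩ := hHDmax w (z • (J w)) hwΓ hweak
    have := hR.2 ⟨J w, hu⟩
    rw [hHDw] at this
    simp only [sub_self, map_zero] at this
    have hJw : J w = 0 := this.symm
    have hw0 : w = 0 := hJinj (by rw [hJw, map_zero])
    refine ⟨?_, hw0⟩
    rw [hw0, add_zero] at hsum
    exact hsum
  · -- orthogonality at z = -1
    intro hz f w hfΓ hwL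
    rw [hpol f w, hwL f hfΓ, hz]
    ring
end

section
/- Let (Γ, G) be a boundary pair for h with Dirichlet operator H^D, and for z ∉ spec(H^D) let S(z) : ran Γ → H¹ be the Dirichlet solution operator, the inverse of Γ restricted to the weak solution space L¹(z). Then for z, w ∉ spec(H^D) one has S(z) − S(w) = (z − w)(H^D − z)⁻¹ S(w) as operators ran Γ → H¹; equivalently S(z) = U(z,w) S(w) where U(z,w) = id + (z−w)(H^D − z)⁻¹. -/
/-- Let `(Γ, G)` be a boundary pair for `h` with Dirichlet operator
`HD`, and for `z, w ∉ spec HD` let `Sz`, `Sw` be the Dirichlet solution operators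
(the inverses of `Γ` restricted to the weak solution spaces `L¹(z)`, `L¹(w)`).  Then
`S(z) - S(w) = (z-w)(HD - z)⁻¹ S(w)` as operators `ran Γ → H¹`; the correction term
`(z-w)(HD - z)⁻¹ S(w)φ` is realised by an element `v ∈ ker Γ ⊂ H¹`. -/
theorem dirichlet_solution_operator_difference
    {H H1 G : Type*}
    [NormedAddCommGroup H] [InnerProductSpace ℂ H] [CompleteSpace H]
    [NormedAddCommGroup H1] [InnerProductSpace ℂ H1] [CompleteSpace H1]
    [NormedAddCommGroup G] [InnerProductSpace ℂ G] [CompleteSpace G]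
    (J : H1 →L[ℂ] H) (hJinj : Function.Injective J) (hJdense : DenseRange J)
    (hform : H1 → H1 → ℂ)
    (hpol : ∀ u v : H1, (inner ℂ u v : ℂ) = (inner ℂ (J u) (J v) : ℂ) + hform u v)
    (Γ : H1 →L[ℂ] G)
    (hker : Dense (J '' ((LinearMap.ker (Γ : H1 →ₗ[ℂ] G) : Submodule ℂ H1) : Set H1)))
    (hran : Dense ((LinearMap.range (Γ : H1 →ₗ[ℂ] G) : Submodule ℂ G) : Set G))
    (HD : H →ₗ.[ℂ] H)
    (hHDdom : ∀ u : HD.domain, ∃ u1 : H1, J u1 = (u : H) ∧ Γ u1 = 0 ∧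
      ∀ f : H1, Γ f = 0 → hform f u1 = (inner ℂ (J f) (HD u) : ℂ))
    (hHDmax : ∀ (u1 : H1) (w : H), Γ u1 = 0 →
      (∀ f : H1, Γ f = 0 → hform f u1 = (inner ℂ (J f) w : ℂ)) →
      ∃ hu : J u1 ∈ HD.domain, HD ⟨J u1, hu⟩ = w)
    (z w : ℂ) (Rz : H →L[ℂ] H) (hRz : ResolventAt HD z Rz)
    -- the Dirichlet solution operator at `z`
    (Sz : (LinearMap.range (Γ : H1 →ₗ[ℂ] G) : Submodule ℂ G) →ₗ[ℂ] H1)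
    (hSz1 : ∀ (φ : (LinearMap.range (Γ : H1 →ₗ[ℂ] G) : Submodule ℂ G)) (f : H1), Γ f = 0 →
      hform f (Sz φ) = z * (inner ℂ (J f) (J (Sz φ)) : ℂ))
    (hSz2 : ∀ φ : (LinearMap.range (Γ : H1 →ₗ[ℂ] G) : Submodule ℂ G), Γ (Sz φ) = (φ : G))
    -- the Dirichlet solution operator at `w`
    (Sw : (LinearMap.range (Γ : H1 →ₗ[ℂ] G) : Submodule ℂ G) →ₗ[ℂ] H1)
    (hSw1 : ∀ (φ : (LinearMap.range (Γ : H1 →ₗ[ℂ] G) : Submodule ℂ G)) (f : H1), Γ f = 0 →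
      hform f (Sw φ) = w * (inner ℂ (J f) (J (Sw φ)) : ℂ))
    (hSw2 : ∀ φ : (LinearMap.range (Γ : H1 →ₗ[ℂ] G) : Submodule ℂ G), Γ (Sw φ) = (φ : G)) :
    ∀ φ : (LinearMap.range (Γ : H1 →ₗ[ℂ] G) : Submodule ℂ G), ∃ v : H1,
      Γ v = 0 ∧ J v = (z - w) • Rz (J (Sw φ)) ∧ Sz φ = Sw φ + v := by

  intro φ
  -- hform is sesquilinear (difference of inner products)
  have hfe : ∀ u v : H1, hform u v = (inner ℂ u v : ℂ) - (inner ℂ (J u) (J v) : ℂ) := by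
    intro u v
    rw [hpol]; ring
  -- uniqueness of weak solutions at z
  have huniq : ∀ d : H1, Γ d = 0 →
      (∀ f : H1, Γ f = 0 → hform f d = z * (inner ℂ (J f) (J d) : ℂ)) → d = 0 := by
    intro d hΓd hd
    obtain ⟨hdm, hHDd⟩ := hHDmax d (z • J d) hΓd (fun f hf => by
      rw [hd f hf, inner_smul_right])
    have h2 := hRz.2 ⟨J d, hdm⟩
    simp only [hHDd] at h2
    simp only [sub_self, map_zero] at h2
    have : J d = J 0 := by simpa using h2.symm
    exact hJinj this
  -- x = J (Sw φ); Rz x ∈ dom HD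
  set x : H := J (Sw φ) with hx
  obtain ⟨hRxdom, hRx⟩ := hRz.1 x
  obtain ⟨u1, hJu1, hΓu1, hu1⟩ := hHDdom ⟨Rz x, hRxdom⟩
  have hHDval : HD ⟨Rz x, hRxdom⟩ = x + z • Rz x := sub_eq_iff_eq_add.mp hRx
  refine ⟨(z - w) • u1, by simp [hΓu1], by simp [hJu1], ?_⟩
  -- show difference is zero
  have key : Sz φ - (Sw φ + (z - w) • u1) = 0 := by
    apply huniq
    · simp [hSz2 φ, hSw2 φ, hΓu1]
    · intro f hf
      have e1 := hSz1 φ f hf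
      have e2 := hSw1 φ f hf
      have e3 := hu1 f hf
      rw [hHDval] at e3
      simp only [hfe] at e1 e2 e3 ⊢
      simp only [map_sub, map_add, map_smul, inner_sub_right, inner_add_right,
        inner_smul_right, hJu1] at e1 e2 e3 ⊢
      rw [← hx] at *
      ring_nf
      ring_nf at e1 e2 e3
      linear_combination e1 - e2 - (z - w) * e3
  have := sub_eq_zero.mp key
  exact this
end

section
/- Let (Γ, G) be a boundary pair for h with Dirichlet operator H^D and Dirichlet solution operators S(z). For z ∉ spec(H^D), define the Dirichlet-to-Neumann sesquilinear form l_z on ran Γ × ran Γ by l_z(φ, ψ) := h(S(z)φ, g) − z⟨S(z)φ, g⟩_H where g ∈ H¹ is any element with Γg = ψ. Then l_z is well-defined (independent of the choice of g), and for z, w ∉ spec(H^D) the difference formula l_z(φ,ψ) − l_w(φ,ψ) = −(z − w)⟨S(z)φ, S(w̄)ψ⟩_H holds. -/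
set_option maxHeartbeats 1000000 in
/-- Let `(Γ, G)` be a boundary pair for `h` with Dirichlet solution
operators `S(·)`.  For `z ∉ spec HD`, the Dirichlet-to-Neumann sesquilinear form
`l_z(φ,ψ) := h(S(z)φ, g) - z⟨S(z)φ, g⟩_H`, where `g ∈ H¹` is any element with `Γg = ψ`,
is well defined (independent of the choice of `g`), and for `z, w ∉ spec HD` the
difference formula `l_z(φ,ψ) - l_w(φ,ψ) = -(z-w)⟨S(z)φ, S(w̄)ψ⟩_H` holds.
(The sesquilinear form `hform` is conjugate-linear in its first slot; `h(a,b)` of the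
paper corresponds to `hform b a`, and `⟨a,b⟩_H` to `inner b a`.) -/
theorem dtn_form_well_defined_and_difference_formula
    {H H1 G : Type*}
    [NormedAddCommGroup H] [InnerProductSpace ℂ H] [CompleteSpace H]
    [NormedAddCommGroup H1] [InnerProductSpace ℂ H1] [CompleteSpace H1]
    [NormedAddCommGroup G] [InnerProductSpace ℂ G] [CompleteSpace G]
    (J : H1 →L[ℂ] H) (hJinj : Function.Injective J) (hJdense : DenseRange J)
    (hform : H1 → H1 → ℂ)
    (hpol : ∀ u v : H1, (inner ℂ u v : ℂ) = (inner ℂ (J u) (J v) : ℂ) + hform u v)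
    (Γ : H1 →L[ℂ] G)
    (hker : Dense (J '' ((LinearMap.ker (Γ : H1 →ₗ[ℂ] G) : Submodule ℂ H1) : Set H1)))
    (hran : Dense ((LinearMap.range (Γ : H1 →ₗ[ℂ] G) : Submodule ℂ G) : Set G))
    (z w : ℂ)
    -- Dirichlet solution operator at `z`
    (Sz : (LinearMap.range (Γ : H1 →ₗ[ℂ] G) : Submodule ℂ G) →ₗ[ℂ] H1)
    (hSz1 : ∀ (φ : (LinearMap.range (Γ : H1 →ₗ[ℂ] G) : Submodule ℂ G)) (f : H1), Γ f = 0 →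
      hform f (Sz φ) = z * (inner ℂ (J f) (J (Sz φ)) : ℂ))
    (hSz2 : ∀ φ : (LinearMap.range (Γ : H1 →ₗ[ℂ] G) : Submodule ℂ G), Γ (Sz φ) = (φ : G))
    -- Dirichlet solution operator at `w`
    (Sw : (LinearMap.range (Γ : H1 →ₗ[ℂ] G) : Submodule ℂ G) →ₗ[ℂ] H1)
    (hSw1 : ∀ (φ : (LinearMap.range (Γ : H1 →ₗ[ℂ] G) : Submodule ℂ G)) (f : H1), Γ f = 0 →
      hform f (Sw φ) = w * (inner ℂ (J f) (J (Sw φ)) : ℂ))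
    (hSw2 : ∀ φ : (LinearMap.range (Γ : H1 →ₗ[ℂ] G) : Submodule ℂ G), Γ (Sw φ) = (φ : G))
    -- Dirichlet solution operator at `w̄`
    (Swb : (LinearMap.range (Γ : H1 →ₗ[ℂ] G) : Submodule ℂ G) →ₗ[ℂ] H1)
    (hSwb1 : ∀ (φ : (LinearMap.range (Γ : H1 →ₗ[ℂ] G) : Submodule ℂ G)) (f : H1), Γ f = 0 →
      hform f (Swb φ) = (starRingEnd ℂ) w * (inner ℂ (J f) (J (Swb φ)) : ℂ))
    (hSwb2 : ∀ φ : (LinearMap.range (Γ : H1 →ₗ[ℂ] G) : Submodule ℂ G), Γ (Swb φ) = (φ : G)) :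
    -- well-definedness of `l_z`
    (∀ (φ : (LinearMap.range (Γ : H1 →ₗ[ℂ] G) : Submodule ℂ G)) (g₁ g₂ : H1), Γ g₁ = Γ g₂ →
      hform g₁ (Sz φ) - z * (inner ℂ (J g₁) (J (Sz φ)) : ℂ) =
      hform g₂ (Sz φ) - z * (inner ℂ (J g₂) (J (Sz φ)) : ℂ)) ∧
    -- difference formula `l_z(φ,ψ) - l_w(φ,ψ) = -(z-w)⟨S(z)φ, S(w̄)ψ⟩_H`
    (∀ (φ ψ : (LinearMap.range (Γ : H1 →ₗ[ℂ] G) : Submodule ℂ G)) (g : H1), Γ g = (ψ : G) →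
      (hform g (Sz φ) - z * (inner ℂ (J g) (J (Sz φ)) : ℂ)) -
      (hform g (Sw φ) - w * (inner ℂ (J g) (J (Sw φ)) : ℂ)) =
      -(z - w) * (inner ℂ (J (Swb ψ)) (J (Sz φ)) : ℂ)) := by
  have hf : ∀ u v : H1, hform u v = (inner ℂ u v : ℂ) - (inner ℂ (J u) (J v) : ℂ) := by
    intro u v
    have := hpol u v
    linear_combination -this
  have wd : ∀ (ζ : ℂ) (S : (LinearMap.range (Γ : H1 →ₗ[ℂ] G) : Submodule ℂ G) →ₗ[ℂ] H1),
      (∀ (φ : (LinearMap.range (Γ : H1 →ₗ[ℂ] G) : Submodule ℂ G)) (f : H1), Γ f = 0 →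
        hform f (S φ) = ζ * (inner ℂ (J f) (J (S φ)) : ℂ)) →
      ∀ (φ : (LinearMap.range (Γ : H1 →ₗ[ℂ] G) : Submodule ℂ G)) (g₁ g₂ : H1), Γ g₁ = Γ g₂ →
        hform g₁ (S φ) - ζ * (inner ℂ (J g₁) (J (S φ)) : ℂ) =
        hform g₂ (S φ) - ζ * (inner ℂ (J g₂) (J (S φ)) : ℂ) := by
    intro ζ S hS1 φ g₁ g₂ hΓ
    have hΓf : Γ (g₁ - g₂) = 0 := by rw [map_sub, hΓ, sub_self]
    have h1 := hS1 φ (g₁ - g₂) hΓf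
    rw [hf, map_sub, inner_sub_left, inner_sub_left] at h1
    rw [hf, hf]
    linear_combination h1
  refine ⟨wd z Sz hSz1, ?_⟩
  intro φ ψ g hΓg
  rw [wd z Sz hSz1 φ g (Swb ψ) (by rw [hΓg, hSwb2]),
      wd w Sw hSw1 φ g (Swb ψ) (by rw [hΓg, hSwb2])]
  have h0 : Γ (Sz φ - Sw φ) = 0 := by rw [map_sub, hSz2, hSw2, sub_self]
  have h2 := hSwb1 ψ (Sz φ - Sw φ) h0
  rw [hf, map_sub, inner_sub_left, inner_sub_left] at h2
  have h2' := congrArg (starRingEnd ℂ) h2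
  simp only [map_sub, map_mul, inner_conj_symm, RingHomCompTriple.comp_apply,
    Complex.conj_conj, RingHom.id_apply] at h2'
  rw [hf, hf]
  linear_combination h2'
end

section
/- Let (Γ, G) be a boundary pair for h and l_z the Dirichlet-to-Neumann form at z ∉ spec(H^D). Then for z with Im z ≥ 0 and φ ∈ ran Γ, the imaginary part of the quadratic form satisfies Im l_z(φ) = −(Im z) · ‖S(z)φ‖²_H ≤ 0. In particular z ↦ −l_z(φ) is a Herglotz function for each fixed φ. -/
/-- Let `(Γ, G)` be a boundary pair for `h` and `l_z` the
Dirichlet-to-Neumann form at `z ∉ spec HD`.  For `z` with `Im z ≥ 0` and `φ ∈ ran Γ`,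
the imaginary part of the quadratic form satisfies
`Im l_z(φ) = -(Im z)·‖S(z)φ‖²_H ≤ 0`.
(Here `l_z(φ) = l_z(φ,φ)` is computed with the lift `g = S(z)φ` of `φ`.) -/
theorem dtn_form_imaginary_part
    {H H1 G : Type*}
    [NormedAddCommGroup H] [InnerProductSpace ℂ H] [CompleteSpace H]
    [NormedAddCommGroup H1] [InnerProductSpace ℂ H1] [CompleteSpace H1]
    [NormedAddCommGroup G] [InnerProductSpace ℂ G] [CompleteSpace G]
    (J : H1 →L[ℂ] H) (hJinj : Function.Injective J) (hJdense : DenseRange J)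
    (hform : H1 → H1 → ℂ)
    (hpol : ∀ u v : H1, (inner ℂ u v : ℂ) = (inner ℂ (J u) (J v) : ℂ) + hform u v)
    (Γ : H1 →L[ℂ] G)
    (hker : Dense (J '' ((LinearMap.ker (Γ : H1 →ₗ[ℂ] G) : Submodule ℂ H1) : Set H1)))
    (hran : Dense ((LinearMap.range (Γ : H1 →ₗ[ℂ] G) : Submodule ℂ G) : Set G))
    (z : ℂ) (hz : 0 ≤ z.im)
    -- Dirichlet solution operator at `z`
    (Sz : (LinearMap.range (Γ : H1 →ₗ[ℂ] G) : Submodule ℂ G) →ₗ[ℂ] H1)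
    (hSz1 : ∀ (φ : (LinearMap.range (Γ : H1 →ₗ[ℂ] G) : Submodule ℂ G)) (f : H1), Γ f = 0 →
      hform f (Sz φ) = z * (inner ℂ (J f) (J (Sz φ)) : ℂ))
    (hSz2 : ∀ φ : (LinearMap.range (Γ : H1 →ₗ[ℂ] G) : Submodule ℂ G), Γ (Sz φ) = (φ : G)) :
    ∀ φ : (LinearMap.range (Γ : H1 →ₗ[ℂ] G) : Submodule ℂ G),
      (hform (Sz φ) (Sz φ) - z * (inner ℂ (J (Sz φ)) (J (Sz φ)) : ℂ)).im =
        -(z.im) * ‖J (Sz φ)‖ ^ 2 ∧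
      (hform (Sz φ) (Sz φ) - z * (inner ℂ (J (Sz φ)) (J (Sz φ)) : ℂ)).im ≤ 0 := by
  intro φ
  set s := Sz φ with hs
  have h1 : hform s s = (inner ℂ s s : ℂ) - (inner ℂ (J s) (J s) : ℂ) := by
    rw [hpol s s]; ring
  have h2 : (inner ℂ (J s) (J s) : ℂ) = ((‖J s‖ ^ 2 : ℝ) : ℂ) := by
    rw [inner_self_eq_norm_sq_to_K]; norm_cast
  have h0 : (inner ℂ s s : ℂ) = ((‖s‖ ^ 2 : ℝ) : ℂ) := by
    rw [inner_self_eq_norm_sq_to_K]; norm_cast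
  have him : (hform s s - z * (inner ℂ (J s) (J s) : ℂ)).im = -(z.im) * ‖J s‖ ^ 2 := by
    rw [h1, h2, h0]
    simp only [Complex.sub_im, Complex.mul_im, Complex.ofReal_im, Complex.ofReal_re]
    ring
  refine ⟨him, ?_⟩
  rw [him]
  have : (0:ℝ) ≤ ‖J s‖ ^ 2 := by positivity
  nlinarith
end

section
/- Let (Γ, G) be a boundary pair for h, with Neumann operator H^N (associated with h) and Dirichlet operator H^D. For z ∉ spec(H^D) ∪ spec(H^N), the weak Dirichlet-to-Neumann operator Λ̃(z) : G^{1/2} → G^{−1/2} (defined by ⟨Λ̃(z)φ, ψ⟩ = l_z(φ,ψ)) is bijective, with inverse Λ̃(z)⁻¹ = Γ (H̃^N − z)⁻¹ Γ*, where (H̃^N − z)⁻¹ : H^{−1} → H¹ is the extended Neumann resolvent and Γ* : G^{−1/2} → H^{−1} is the dual of Γ. -/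
set_option maxHeartbeats 1000000

/-- Let `(Γ, G)` be a boundary pair for `h` with Neumann operator
`HN` and Dirichlet operator (implicit through the Dirichlet solution operator `Sz`).
For `z ∉ spec HD ∪ spec HN`, the weak Dirichlet-to-Neumann operator
`Λ̃(z) : G^{1/2} → G^{-1/2}`, `⟨Λ̃(z)φ, ψ⟩ = l_z(φ,ψ)`, is bijective, with inverse
`Λ̃(z)⁻¹ = Γ (H̃N - z)⁻¹ Γ*`.  Elements of `G^{-1/2}` are represented as conjugate-linear
functionals `F` on `ran Γ` bounded with respect to the `G^{1/2}`-norm `‖S(-1)·‖_{H¹}`;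
bijectivity means that for every such `F` there is a unique `φ ∈ ran Γ = G^{1/2}` with
`l_z(φ, ·) = F`, and this `φ` equals `Γ u` with `u = (H̃N - z)⁻¹ Γ* F` the weak
Neumann solution of `(h - z)(u, f) = F(Γ f)` for all `f ∈ H¹`. -/
theorem weak_dtn_bijective_inverse_via_neumann_resolvent
    {H H1 G : Type*}
    [NormedAddCommGroup H] [InnerProductSpace ℂ H] [CompleteSpace H]
    [NormedAddCommGroup H1] [InnerProductSpace ℂ H1] [CompleteSpace H1]
    [NormedAddCommGroup G] [InnerProductSpace ℂ G] [CompleteSpace G]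
    (J : H1 →L[ℂ] H) (hJinj : Function.Injective J) (hJdense : DenseRange J)
    (hform : H1 → H1 → ℂ)
    (hpol : ∀ u v : H1, (inner ℂ u v : ℂ) = (inner ℂ (J u) (J v) : ℂ) + hform u v)
    (Γ : H1 →L[ℂ] G)
    (hker : Dense (J '' ((LinearMap.ker (Γ : H1 →ₗ[ℂ] G) : Submodule ℂ H1) : Set H1)))
    (hran : Dense ((LinearMap.range (Γ : H1 →ₗ[ℂ] G) : Submodule ℂ G) : Set G))
    -- the Neumann operator `HN`, associated with the form `h`
    (HN : H →ₗ.[ℂ] H)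
    (hHNdom : ∀ u : HN.domain, ∃ u1 : H1, J u1 = (u : H) ∧
      ∀ f : H1, hform f u1 = (inner ℂ (J f) (HN u) : ℂ))
    (hHNmax : ∀ (u1 : H1) (v : H),
      (∀ f : H1, hform f u1 = (inner ℂ (J f) v : ℂ)) →
      ∃ hu : J u1 ∈ HN.domain, HN ⟨J u1, hu⟩ = v)
    (hHNsym : ∀ u v : HN.domain, (inner ℂ (HN u) ((v : H)) : ℂ) = inner ℂ ((u : H)) (HN v))
    (z : ℂ)
    -- `z ∉ spec HN`
    (RN : H →L[ℂ] H) (hRN : ResolventAt HN z RN)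
    -- `z ∉ spec HD`: the Dirichlet solution operator at `z` exists and is unique
    (Sz : (LinearMap.range (Γ : H1 →ₗ[ℂ] G) : Submodule ℂ G) →ₗ[ℂ] H1)
    (hSz1 : ∀ (φ : (LinearMap.range (Γ : H1 →ₗ[ℂ] G) : Submodule ℂ G)) (f : H1), Γ f = 0 →
      hform f (Sz φ) = z * (inner ℂ (J f) (J (Sz φ)) : ℂ))
    (hSz2 : ∀ φ : (LinearMap.range (Γ : H1 →ₗ[ℂ] G) : Submodule ℂ G), Γ (Sz φ) = (φ : G))
    (hSz3 : ∀ u : H1, (∀ f : H1, Γ f = 0 → hform f u = z * (inner ℂ (J f) (J u) : ℂ)) →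
      ∀ hm : Γ u ∈ LinearMap.range (Γ : H1 →ₗ[ℂ] G), Sz ⟨Γ u, hm⟩ = u)
    -- the Dirichlet solution operator at `-1`, giving the `G^{1/2}`-norm `‖Sm ·‖_{H¹}`
    (Sm : (LinearMap.range (Γ : H1 →ₗ[ℂ] G) : Submodule ℂ G) →ₗ[ℂ] H1)
    (hSm1 : ∀ (φ : (LinearMap.range (Γ : H1 →ₗ[ℂ] G) : Submodule ℂ G)) (f : H1), Γ f = 0 →
      hform f (Sm φ) = (-1 : ℂ) * (inner ℂ (J f) (J (Sm φ)) : ℂ))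
    (hSm2 : ∀ φ : (LinearMap.range (Γ : H1 →ₗ[ℂ] G) : Submodule ℂ G), Γ (Sm φ) = (φ : G))
    (F : ↥(LinearMap.range (Γ : H1 →ₗ[ℂ] G)) → ℂ)
    (hFadd : ∀ a b, F (a + b) = F a + F b)
    (hFsmul : ∀ (c : ℂ) a, F (c • a) = (starRingEnd ℂ) c * F a)
    (hFbdd : ∃ C : ℝ, ∀ η, ‖F η‖ ≤ C * ‖Sm η‖) :
      -- bijectivity of `Λ̃(z)`
      (∃! φ : (LinearMap.range (Γ : H1 →ₗ[ℂ] G) : Submodule ℂ G),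
        ∀ (η : (LinearMap.range (Γ : H1 →ₗ[ℂ] G) : Submodule ℂ G)) (g : H1), Γ g = (η : G) →
          hform g (Sz φ) - z * (inner ℂ (J g) (J (Sz φ)) : ℂ) = F η) ∧
      -- the inverse is `Γ (H̃N - z)⁻¹ Γ*`
      (∀ φ : (LinearMap.range (Γ : H1 →ₗ[ℂ] G) : Submodule ℂ G),
        (∀ (η : (LinearMap.range (Γ : H1 →ₗ[ℂ] G) : Submodule ℂ G)) (g : H1), Γ g = (η : G) →
          hform g (Sz φ) - z * (inner ℂ (J g) (J (Sz φ)) : ℂ) = F η) →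
        ∃ u : H1, Γ u = (φ : G) ∧
          ∀ f : H1, hform f u - z * (inner ℂ (J f) (J u) : ℂ) =
            F ⟨Γ f, LinearMap.mem_range_self (Γ : H1 →ₗ[ℂ] G) f⟩) := by
  
  classical
  obtain ⟨C, hC⟩ := hFbdd
  -- derived sesquilinear formula for the form
  have hf' : ∀ u v : H1, hform u v = (inner ℂ u v : ℂ) - (inner ℂ (J u) (J v) : ℂ) := by
    intro u v
    linear_combination -hpol u v
  have hF0 : F 0 = 0 := by
    have h := hFadd 0 0
    rw [add_zero] at h
    have : F 0 + F 0 = F 0 + 0 := by rw [add_zero]; exact h.symm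
    exact add_left_cancel this
  -- `Sm ⟨Γ f⟩` is the H1-orthogonal projection of `f` onto (ker Γ)ᗮ, hence contractive
  have hSmbound : ∀ f : H1, ‖Sm ⟨Γ f, LinearMap.mem_range_self (Γ : H1 →ₗ[ℂ] G) f⟩‖ ≤ ‖f‖ := by
    intro f
    set p := Sm ⟨Γ f, LinearMap.mem_range_self (Γ : H1 →ₗ[ℂ] G) f⟩ with hp
    have hkerp : Γ (f - p) = 0 := by
      rw [map_sub, hSm2]
      simp
    have h1 := hSm1 ⟨Γ f, LinearMap.mem_range_self (Γ : H1 →ₗ[ℂ] G) f⟩ (f - p) hkerp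
    have horth : (inner ℂ (f - p) p : ℂ) = 0 := by
      rw [← hp] at h1
      linear_combination (hpol (f - p) p) + h1
    have hfp : (inner ℂ f p : ℂ) = inner ℂ p p := by
      have hexp : (inner ℂ (f - p) p : ℂ) = inner ℂ f p - inner ℂ p p := inner_sub_left f p p
      rw [hexp] at horth
      exact sub_eq_zero.mp horth
    have hnorm : ‖p‖ * ‖p‖ ≤ ‖f‖ * ‖p‖ := by
      have e1 : (‖p‖ : ℝ) * ‖p‖ = ‖(inner ℂ p p : ℂ)‖ := by
        rw [@inner_self_eq_norm_sq_to_K ℂ]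
        simp [sq]
      rw [e1, ← hfp]
      exact norm_inner_le_norm f p
    rcases eq_or_lt_of_le (norm_nonneg p) with h0 | h0
    · rw [← h0]; exact norm_nonneg f
    · exact le_of_mul_le_mul_right hnorm h0
  -- Riesz representation of `F ∘ Γ` in H1
  let L : H1 →ₗ[ℂ] ℂ :=
    { toFun := fun f => (starRingEnd ℂ) (F ⟨Γ f, LinearMap.mem_range_self (Γ : H1 →ₗ[ℂ] G) f⟩)
      map_add' := by
        intro x y
        have hη : (⟨Γ (x + y), LinearMap.mem_range_self (Γ : H1 →ₗ[ℂ] G) (x + y)⟩ :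
            ↥(LinearMap.range (Γ : H1 →ₗ[ℂ] G))) =
            ⟨Γ x, LinearMap.mem_range_self (Γ : H1 →ₗ[ℂ] G) x⟩ + ⟨Γ y, LinearMap.mem_range_self (Γ : H1 →ₗ[ℂ] G) y⟩ :=
          Subtype.ext (map_add Γ x y)
        rw [hη, hFadd, map_add]
      map_smul' := by
        intro c x
        have hη : (⟨Γ (c • x), LinearMap.mem_range_self (Γ : H1 →ₗ[ℂ] G) (c • x)⟩ :
            ↥(LinearMap.range (Γ : H1 →ₗ[ℂ] G))) =
            c • ⟨Γ x, LinearMap.mem_range_self (Γ : H1 →ₗ[ℂ] G) x⟩ :=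
          Subtype.ext (map_smul Γ c x)
        rw [hη, hFsmul, map_mul]
        simp }
  have hLbdd : ∀ f : H1, ‖L f‖ ≤ |C| * ‖f‖ := by
    intro f
    have h1 : ‖L f‖ = ‖F ⟨Γ f, LinearMap.mem_range_self (Γ : H1 →ₗ[ℂ] G) f⟩‖ := by
      simp [L]
    rw [h1]
    calc ‖F ⟨Γ f, LinearMap.mem_range_self (Γ : H1 →ₗ[ℂ] G) f⟩‖
        ≤ C * ‖Sm ⟨Γ f, LinearMap.mem_range_self (Γ : H1 →ₗ[ℂ] G) f⟩‖ := hC _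
      _ ≤ |C| * ‖Sm ⟨Γ f, LinearMap.mem_range_self (Γ : H1 →ₗ[ℂ] G) f⟩‖ :=
          mul_le_mul_of_nonneg_right (le_abs_self C) (norm_nonneg _)
      _ ≤ |C| * ‖f‖ := mul_le_mul_of_nonneg_left (hSmbound f) (abs_nonneg C)
  let Lc : H1 →L[ℂ] ℂ := L.mkContinuous |C| hLbdd
  let w : H1 := (InnerProductSpace.toDual ℂ H1).symm Lc
  have hw : ∀ f : H1, F ⟨Γ f, LinearMap.mem_range_self (Γ : H1 →ₗ[ℂ] G) f⟩ = inner ℂ f w := by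
    intro f
    have h1 : (inner ℂ w f : ℂ) = Lc f := InnerProductSpace.toDual_symm_apply
    have h2 : (inner ℂ f w : ℂ) = (starRingEnd ℂ) (inner ℂ w f) := (inner_conj_symm f w).symm
    rw [h2, h1]
    simp [Lc, L]
  -- the weak Neumann solution
  have hweak : ∃ u : H1, ∀ f : H1,
      hform f u - z * (inner ℂ (J f) (J u) : ℂ) = F ⟨Γ f, LinearMap.mem_range_self (Γ : H1 →ₗ[ℂ] G) f⟩ := by
    obtain ⟨hy, hyeq⟩ := hRN.1 ((1 + z) • (J w))
    obtain ⟨v1, hv1J, hv1form⟩ := hHNdom ⟨RN ((1 + z) • (J w)), hy⟩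
    refine ⟨w + v1, fun f => ?_⟩
    rw [hw f]
    have e1 : (inner ℂ (J f) (HN ⟨RN ((1 + z) • (J w)), hy⟩) : ℂ)
        - z * inner ℂ (J f) (J v1) = (1 + z) * inner ℂ (J f) (J w) := by
      have := congrArg (fun x => (inner ℂ (J f) x : ℂ)) hyeq
      simp only [inner_sub_right, inner_smul_right] at this
      rw [hv1J]
      exact this
    have e2 : (inner ℂ f v1 : ℂ) - inner ℂ (J f) (J v1)
        = inner ℂ (J f) (HN ⟨RN ((1 + z) • (J w)), hy⟩) := by
      have := hv1form f
      rw [hf' f v1] at this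
      exact this
    rw [hf' f (w + v1)]
    simp only [map_add, inner_add_right]
    linear_combination e2 + e1
  obtain ⟨u, hu⟩ := hweak
  have huDir : ∀ f : H1, Γ f = 0 → hform f u = z * (inner ℂ (J f) (J u) : ℂ) := by
    intro f hf
    have h := hu f
    have hη : (⟨Γ f, LinearMap.mem_range_self (Γ : H1 →ₗ[ℂ] G) f⟩ : ↥(LinearMap.range (Γ : H1 →ₗ[ℂ] G))) = 0 :=
      Subtype.ext hf
    rw [hη, hF0] at h
    linear_combination h
  have hSzu : Sz ⟨Γ u, LinearMap.mem_range_self (Γ : H1 →ₗ[ℂ] G) u⟩ = u :=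
    hSz3 u huDir (LinearMap.mem_range_self (Γ : H1 →ₗ[ℂ] G) u)
  set φ0 : ↥(LinearMap.range (Γ : H1 →ₗ[ℂ] G)) := ⟨Γ u, LinearMap.mem_range_self (Γ : H1 →ₗ[ℂ] G) u⟩ with hφ0
  have hP0 : ∀ (η : ↥(LinearMap.range (Γ : H1 →ₗ[ℂ] G))) (g : H1), Γ g = (η : G) →
      hform g (Sz φ0) - z * (inner ℂ (J g) (J (Sz φ0)) : ℂ) = F η := by
    intro η g hg
    rw [hSzu]
    have hη : (⟨Γ g, LinearMap.mem_range_self (Γ : H1 →ₗ[ℂ] G) g⟩ : ↥(LinearMap.range (Γ : H1 →ₗ[ℂ] G))) = η :=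
      Subtype.ext hg
    rw [← hη]
    exact hu g
  -- uniqueness
  have huniq : ∀ φ φ' : ↥(LinearMap.range (Γ : H1 →ₗ[ℂ] G)),
      (∀ (η : ↥(LinearMap.range (Γ : H1 →ₗ[ℂ] G))) (g : H1), Γ g = (η : G) →
        hform g (Sz φ) - z * (inner ℂ (J g) (J (Sz φ)) : ℂ) = F η) →
      (∀ (η : ↥(LinearMap.range (Γ : H1 →ₗ[ℂ] G))) (g : H1), Γ g = (η : G) →
        hform g (Sz φ') - z * (inner ℂ (J g) (J (Sz φ')) : ℂ) = F η) →
      φ = φ' := by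
    intro φ φ' h h'
    have key : ∀ g : H1, hform g (Sz φ - Sz φ')
        = (inner ℂ (J g) (z • J (Sz φ - Sz φ')) : ℂ) := by
      intro g
      have a := h ⟨Γ g, LinearMap.mem_range_self (Γ : H1 →ₗ[ℂ] G) g⟩ g rfl
      have b := h' ⟨Γ g, LinearMap.mem_range_self (Γ : H1 →ₗ[ℂ] G) g⟩ g rfl
      rw [hf'] at a b
      rw [hf']
      simp only [map_sub, inner_sub_right, inner_smul_right]
      linear_combination a - b
    obtain ⟨hmem, heq⟩ := hHNmax (Sz φ - Sz φ') (z • J (Sz φ - Sz φ')) key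
    have h0 := hRN.2 ⟨J (Sz φ - Sz φ'), hmem⟩
    rw [heq] at h0
    simp only [sub_self, map_zero] at h0
    have hJeq : J (Sz φ - Sz φ') = J 0 := by rw [map_zero]; exact h0.symm
    have hd : Sz φ - Sz φ' = 0 := hJinj hJeq
    have hs : Sz φ = Sz φ' := sub_eq_zero.mp hd
    have : (φ : G) = (φ' : G) := by
      rw [← hSz2 φ, ← hSz2 φ', hs]
    exact Subtype.ext this
  constructor
  · exact ⟨φ0, hP0, fun ψ hψ => huniq ψ φ0 hψ hP0⟩
  · intro φ hφ
    exact ⟨Sz φ, hSz2 φ, fun f => hφ ⟨Γ f, LinearMap.mem_range_self (Γ : H1 →ₗ[ℂ] G) f⟩ f rfl⟩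
end

section
/- (Krein's resolvent formula, weak form.) Let (Γ, G) be a boundary pair for h with Neumann operator H^N, Dirichlet operator H^D, Dirichlet solution operators S(z) and weak DtN operators Λ̃(z). Then for z ∉ spec(H^D) ∪ spec(H^N): (H^N − z)⁻¹ − (H^D − z)⁻¹ = S(z) Λ̃(z)⁻¹ S(z̄)*, as operators H → H (where the Dirichlet resolvent is extended by 0 on the orthogonal complement of the closure of ker Γ in H, and S(z̄)* : H → G^{−1/2} is the restriction of the dual of S(z̄)). -/
/-- **Krein's resolvent formula, weak form.** Let `(Γ, G)` be a boundary
pair for `h` with Neumann operator `HN`, Dirichlet operator `HD`, Dirichlet solution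
operators `S(·)` and weak DtN operators `Λ̃(·)`.  For `z ∉ spec HD ∪ spec HN`,
`(HN - z)⁻¹ - (HD - z)⁻¹ = S(z) Λ̃(z)⁻¹ S(z̄)*` as operators `H → H`: for every `f ∈ H`
there is `φ ∈ ran Γ` with `Λ̃(z)φ = S(z̄)*f` (i.e. `l_z(φ,η) = ⟨f, S(z̄)η⟩_H` for all
`η ∈ ran Γ`) such that `(HN - z)⁻¹ f - (HD - z)⁻¹ f = S(z)φ`. -/
theorem krein_resolvent_formula
    {H H1 G : Type*}
    [NormedAddCommGroup H] [InnerProductSpace ℂ H] [CompleteSpace H]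
    [NormedAddCommGroup H1] [InnerProductSpace ℂ H1] [CompleteSpace H1]
    [NormedAddCommGroup G] [InnerProductSpace ℂ G] [CompleteSpace G]
    (J : H1 →L[ℂ] H) (hJinj : Function.Injective J) (hJdense : DenseRange J)
    (hform : H1 → H1 → ℂ)
    (hpol : ∀ u v : H1, (inner ℂ u v : ℂ) = (inner ℂ (J u) (J v) : ℂ) + hform u v)
    (Γ : H1 →L[ℂ] G)
    (hker : Dense (J '' ((LinearMap.ker (Γ : H1 →ₗ[ℂ] G) : Submodule ℂ H1) : Set H1)))
    (hran : Dense ((LinearMap.range (Γ : H1 →ₗ[ℂ] G) : Submodule ℂ G) : Set G))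
    -- the Neumann operator `HN`, associated with the form `h`
    (HN : H →ₗ.[ℂ] H)
    (hHNdom : ∀ u : HN.domain, ∃ u1 : H1, J u1 = (u : H) ∧
      ∀ f : H1, hform f u1 = (inner ℂ (J f) (HN u) : ℂ))
    (hHNmax : ∀ (u1 : H1) (v : H),
      (∀ f : H1, hform f u1 = (inner ℂ (J f) v : ℂ)) →
      ∃ hu : J u1 ∈ HN.domain, HN ⟨J u1, hu⟩ = v)
    -- the Dirichlet operator `HD`, associated with `h` restricted to `ker Γ`
    (HD : H →ₗ.[ℂ] H)
    (hHDdom : ∀ u : HD.domain, ∃ u1 : H1, J u1 = (u : H) ∧ Γ u1 = 0 ∧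
      ∀ f : H1, Γ f = 0 → hform f u1 = (inner ℂ (J f) (HD u) : ℂ))
    (hHDmax : ∀ (u1 : H1) (w : H), Γ u1 = 0 →
      (∀ f : H1, Γ f = 0 → hform f u1 = (inner ℂ (J f) w : ℂ)) →
      ∃ hu : J u1 ∈ HD.domain, HD ⟨J u1, hu⟩ = w)
    (z : ℂ)
    -- `z ∉ spec HN` and `z ∉ spec HD`
    (RN RD : H →L[ℂ] H) (hRN : ResolventAt HN z RN) (hRD : ResolventAt HD z RD)
    -- Dirichlet solution operator at `z`
    (Sz : (LinearMap.range (Γ : H1 →ₗ[ℂ] G) : Submodule ℂ G) →ₗ[ℂ] H1)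
    (hSz1 : ∀ (φ : (LinearMap.range (Γ : H1 →ₗ[ℂ] G) : Submodule ℂ G)) (f : H1), Γ f = 0 →
      hform f (Sz φ) = z * (inner ℂ (J f) (J (Sz φ)) : ℂ))
    (hSz2 : ∀ φ : (LinearMap.range (Γ : H1 →ₗ[ℂ] G) : Submodule ℂ G), Γ (Sz φ) = (φ : G))
    -- Dirichlet solution operator at `z̄`
    (Szb : (LinearMap.range (Γ : H1 →ₗ[ℂ] G) : Submodule ℂ G) →ₗ[ℂ] H1)
    (hSzb1 : ∀ (φ : (LinearMap.range (Γ : H1 →ₗ[ℂ] G) : Submodule ℂ G)) (f : H1), Γ f = 0 →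
      hform f (Szb φ) = (starRingEnd ℂ) z * (inner ℂ (J f) (J (Szb φ)) : ℂ))
    (hSzb2 : ∀ φ : (LinearMap.range (Γ : H1 →ₗ[ℂ] G) : Submodule ℂ G), Γ (Szb φ) = (φ : G)) :
    ∀ f : H, ∃ φ : (LinearMap.range (Γ : H1 →ₗ[ℂ] G) : Submodule ℂ G),
      (∀ (η : (LinearMap.range (Γ : H1 →ₗ[ℂ] G) : Submodule ℂ G)) (g : H1), Γ g = (η : G) →
        hform g (Sz φ) - z * (inner ℂ (J g) (J (Sz φ)) : ℂ) =
          (inner ℂ (J (Szb η)) f : ℂ)) ∧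
      RN f - RD f = J (Sz φ) := by

  have hF : ∀ u v : H1, hform u v = (inner ℂ u v : ℂ) - (inner ℂ (J u) (J v) : ℂ) := by
    intro u v
    linear_combination - hpol u v
  intro f
  obtain ⟨hNf, hNeq⟩ := hRN.1 f
  obtain ⟨hDf, hDeq⟩ := hRD.1 f
  obtain ⟨u1, hu1, hu1form⟩ := hHNdom ⟨RN f, hNf⟩
  obtain ⟨w1, hw1, hw1Γ, hw1form⟩ := hHDdom ⟨RD f, hDf⟩
  have hHNval : HN ⟨RN f, hNf⟩ = f + z • RN f := by
    rw [sub_eq_iff_eq_add] at hNeq; exact hNeq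
  have hHDval : HD ⟨RD f, hDf⟩ = f + z • RD f := by
    rw [sub_eq_iff_eq_add] at hDeq; exact hDeq
  set φ : (LinearMap.range (Γ : H1 →ₗ[ℂ] G) : Submodule ℂ G) := ⟨Γ (u1 - w1), ⟨u1 - w1, rfl⟩⟩ with hφ
  have hformsub : ∀ f' : H1, Γ f' = 0 →
      hform f' (u1 - w1) = z * (inner ℂ (J f') (J (u1 - w1)) : ℂ) := by
    intro f' hf'
    have h1 := hu1form f'
    have h2 := hw1form f' hf'
    rw [hHNval] at h1
    rw [hHDval] at h2
    rw [hF] at h1 h2 ⊢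
    simp only [map_sub, inner_sub_right, inner_add_right, inner_smul_right, hu1, hw1] at *
    linear_combination h1 - h2
  have hd : Sz φ - (u1 - w1) = 0 := by
    have hΓd : Γ (Sz φ - (u1 - w1)) = 0 := by
      rw [map_sub, hSz2 φ]; simp [hφ]
    have hweak : ∀ f' : H1, Γ f' = 0 →
        hform f' (Sz φ - (u1 - w1)) = (inner ℂ (J f') (z • J (Sz φ - (u1 - w1))) : ℂ) := by
      intro f' hf'
      have h1 := hSz1 φ f' hf'
      have h2 := hformsub f' hf'
      rw [hF] at h1 h2 ⊢
      simp only [map_sub, inner_sub_right, inner_smul_right] at *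
      linear_combination h1 - h2
    obtain ⟨hmem, hval⟩ := hHDmax (Sz φ - (u1 - w1)) (z • J (Sz φ - (u1 - w1))) hΓd hweak
    have h3 := hRD.2 ⟨J (Sz φ - (u1 - w1)), hmem⟩
    simp only [hval] at h3
    rw [sub_self, map_zero] at h3
    apply hJinj
    rw [map_zero]
    exact h3.symm
  have hd0 : Sz φ = u1 - w1 := by
    rw [sub_eq_zero] at hd; exact hd
  refine ⟨φ, ?_, ?_⟩
  · intro η g hg
    have hΓg0 : Γ (g - Szb η) = 0 := by rw [map_sub, hg, hSzb2 η, sub_self]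
    have h1 := hSz1 φ (g - Szb η) hΓg0
    have h2 := hSzb1 η w1 hw1Γ
    rw [hF] at h2
    have h2' := congrArg (starRingEnd ℂ) h2
    simp only [map_sub, map_mul, inner_conj_symm, RingHomCompTriple.comp_apply,
      Complex.conj_conj, RingHom.id_apply] at h2'
    have h3 := hu1form (Szb η)
    rw [hHNval] at h3
    rw [hd0] at h1 ⊢
    rw [hF] at h1 h3 ⊢
    simp only [map_sub, inner_sub_left, inner_sub_right, inner_add_right,
      inner_smul_right, hu1, hw1] at *
    linear_combination h1 + h3 - h2'
  · rw [hd0, map_sub, hu1, hw1]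
end

section
/- Let (Γ, G) be a boundary pair for h, and λ ∈ ℂ ∖ spec(H^D). Then the Dirichlet solution operator S(λ) restricts to a bijection from ker Λ(λ) onto ker(H^N − λ) with inverse Γ. In particular, λ is an eigenvalue of the Neumann operator H^N if and only if 0 is an eigenvalue of the strong Dirichlet-to-Neumann operator Λ(λ), and the multiplicities agree. -/
/-- Let `(Γ, G)` be a boundary pair for `h` and `λ ∈ ℂ ∖ spec HD`.
The Dirichlet solution operator `S(λ)` restricts to a bijection from `ker Λ(λ)` onto
`ker (HN - λ)`, with inverse `Γ`.  In particular, `λ` is an eigenvalue of the Neumann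
operator `HN` if and only if `0` is an eigenvalue of the strong Dirichlet-to-Neumann
operator `Λ(λ)` (and multiplicities agree, through the bijection `S(λ)`/`Γ`).
Here `φ ∈ ker Λ(λ)` is expressed as `l_λ(φ, Γg) = 0` for all `g ∈ H¹`, i.e.
`h(g, S(λ)φ) = λ⟨Jg, J S(λ)φ⟩` for all `g ∈ H¹`. -/
theorem neumann_eigenvalue_iff_dtn_kernel
    {H H1 G : Type*}
    [NormedAddCommGroup H] [InnerProductSpace ℂ H] [CompleteSpace H]
    [NormedAddCommGroup H1] [InnerProductSpace ℂ H1] [CompleteSpace H1]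
    [NormedAddCommGroup G] [InnerProductSpace ℂ G] [CompleteSpace G]
    (J : H1 →L[ℂ] H) (hJinj : Function.Injective J) (hJdense : DenseRange J)
    (hform : H1 → H1 → ℂ)
    (hpol : ∀ u v : H1, (inner ℂ u v : ℂ) = (inner ℂ (J u) (J v) : ℂ) + hform u v)
    (Γ : H1 →L[ℂ] G)
    (hker : Dense (J '' ((LinearMap.ker (Γ : H1 →ₗ[ℂ] G) : Submodule ℂ H1) : Set H1)))
    (hran : Dense ((LinearMap.range (Γ : H1 →ₗ[ℂ] G) : Submodule ℂ G) : Set G))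
    -- the Neumann operator `HN`, associated with the form `h`
    (HN : H →ₗ.[ℂ] H)
    (hHNdom : ∀ u : HN.domain, ∃ u1 : H1, J u1 = (u : H) ∧
      ∀ f : H1, hform f u1 = (inner ℂ (J f) (HN u) : ℂ))
    (hHNmax : ∀ (u1 : H1) (v : H),
      (∀ f : H1, hform f u1 = (inner ℂ (J f) v : ℂ)) →
      ∃ hu : J u1 ∈ HN.domain, HN ⟨J u1, hu⟩ = v)
    (lam : ℂ)
    -- `λ ∉ spec HD`: the Dirichlet solution operator at `λ` exists and is unique
    (Sl : (LinearMap.range (Γ : H1 →ₗ[ℂ] G) : Submodule ℂ G) →ₗ[ℂ] H1)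
    (hSl1 : ∀ (φ : (LinearMap.range (Γ : H1 →ₗ[ℂ] G) : Submodule ℂ G)) (f : H1), Γ f = 0 →
      hform f (Sl φ) = lam * (inner ℂ (J f) (J (Sl φ)) : ℂ))
    (hSl2 : ∀ φ : (LinearMap.range (Γ : H1 →ₗ[ℂ] G) : Submodule ℂ G), Γ (Sl φ) = (φ : G))
    (hSl3 : ∀ u : H1, (∀ f : H1, Γ f = 0 → hform f u = lam * (inner ℂ (J f) (J u) : ℂ)) →
      ∀ hm : Γ u ∈ LinearMap.range (Γ : H1 →ₗ[ℂ] G), Sl ⟨Γ u, hm⟩ = u) :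
    -- `S(λ)` maps `ker Λ(λ)` into `ker (HN - λ)`
    (∀ φ : (LinearMap.range (Γ : H1 →ₗ[ℂ] G) : Submodule ℂ G),
      (∀ g : H1, hform g (Sl φ) = lam * (inner ℂ (J g) (J (Sl φ)) : ℂ)) →
      ∃ hu : J (Sl φ) ∈ HN.domain, HN ⟨J (Sl φ), hu⟩ = lam • (J (Sl φ))) ∧
    -- conversely, `Γ` maps `ker (HN - λ)` into `ker Λ(λ)`, with `S(λ) ∘ Γ = id` there
    (∀ u : HN.domain, HN u = lam • (u : H) →
      ∃ u1 : H1, J u1 = (u : H) ∧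
        (∀ g : H1, hform g u1 = lam * (inner ℂ (J g) (J u1) : ℂ)) ∧
        ∀ hm : Γ u1 ∈ LinearMap.range (Γ : H1 →ₗ[ℂ] G), Sl ⟨Γ u1, hm⟩ = u1) ∧
    -- eigenvalue equivalence
    ((∃ u : HN.domain, (u : H) ≠ 0 ∧ HN u = lam • (u : H)) ↔
      (∃ φ : (LinearMap.range (Γ : H1 →ₗ[ℂ] G) : Submodule ℂ G), (φ : G) ≠ 0 ∧
        ∀ g : H1, hform g (Sl φ) = lam * (inner ℂ (J g) (J (Sl φ)) : ℂ))) := by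

  classical
  -- auxiliary: S(λ) maps ker Λ(λ) into ker (HN - λ)
  have part1 : ∀ φ : (LinearMap.range (Γ : H1 →ₗ[ℂ] G) : Submodule ℂ G),
      (∀ g : H1, hform g (Sl φ) = lam * (inner ℂ (J g) (J (Sl φ)) : ℂ)) →
      ∃ hu : J (Sl φ) ∈ HN.domain, HN ⟨J (Sl φ), hu⟩ = lam • (J (Sl φ)) := by
    intro φ hφ
    exact hHNmax (Sl φ) (lam • (J (Sl φ))) (fun f => by
      rw [hφ f, inner_smul_right])
  have part2 : ∀ u : HN.domain, HN u = lam • (u : H) →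
      ∃ u1 : H1, J u1 = (u : H) ∧
        (∀ g : H1, hform g u1 = lam * (inner ℂ (J g) (J u1) : ℂ)) ∧
        ∀ hm : Γ u1 ∈ LinearMap.range (Γ : H1 →ₗ[ℂ] G), Sl ⟨Γ u1, hm⟩ = u1 := by
    intro u hu
    obtain ⟨u1, hJu1, hu1⟩ := hHNdom u
    have heig : ∀ g : H1, hform g u1 = lam * (inner ℂ (J g) (J u1) : ℂ) := by
      intro g
      rw [hu1 g, hu, hJu1.symm, inner_smul_right]
    exact ⟨u1, hJu1, heig, hSl3 u1 (fun f _ => heig f)⟩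
  refine ⟨part1, part2, ?_, ?_⟩
  · rintro ⟨u, hune, hu⟩
    obtain ⟨u1, hJu1, heig, hfix⟩ := part2 u hu
    have hm : Γ u1 ∈ LinearMap.range (Γ : H1 →ₗ[ℂ] G) := ⟨u1, rfl⟩
    have hSlφ : Sl ⟨Γ u1, hm⟩ = u1 := hfix hm
    refine ⟨⟨Γ u1, hm⟩, ?_, ?_⟩
    · intro h0
      have h0' : (⟨Γ u1, hm⟩ : (LinearMap.range (Γ : H1 →ₗ[ℂ] G) : Submodule ℂ G)) = 0 :=
        Subtype.ext h0
      have : u1 = 0 := by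
        rw [← hSlφ, h0', map_zero]
      exact hune (by rw [← hJu1, this, map_zero])
    · rw [hSlφ]; exact heig
  · rintro ⟨φ, hφne, hφ⟩
    obtain ⟨hu, heq⟩ := part1 φ hφ
    refine ⟨⟨J (Sl φ), hu⟩, ?_, heq⟩
    intro h0
    have h1 : Sl φ = 0 := hJinj (by simpa using h0)
    apply hφne
    rw [← hSl2 φ, h1, map_zero]
end

section
/- Let (Γ, G) be a boundary pair for h. The following are equivalent: (i) the Neumann-to-Dirichlet operator Λ⁻¹ = Γ Γ^{(1)*} : G → G is compact (where Γ^{(1)*} is the adjoint of Γ : H¹ → G); (ii) Γ(H̃^N − z)⁻¹Γ* : G → G is compact for all z ∉ spec(H^N); (iii) Γ : H¹ → G is a compact operator. -/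
open ContinuousLinearMap in
/-- If `T T†` is compact then `T†` is compact (Hilbert spaces). -/
lemma aux_adjoint_compact {E F : Type*}
    [NormedAddCommGroup E] [InnerProductSpace ℂ E] [CompleteSpace E]
    [NormedAddCommGroup F] [InnerProductSpace ℂ F] [CompleteSpace F]
    (T : E →L[ℂ] F) (h : IsCompactOperator (T ∘L adjoint T)) :
    IsCompactOperator (adjoint T) := by
  classical
  set S := adjoint T with hS
  refine (isCompactOperator_iff_isCompact_closure_image_closedBall (S : F →ₗ[ℂ] E) one_pos).mpr ?_
  refine TotallyBounded.isCompact_of_isClosed ?_ isClosed_closure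
  refine TotallyBounded.closure ?_
  have hTB : TotallyBounded (((T ∘L S) : F →ₗ[ℂ] F) '' Metric.closedBall 0 1) :=
    ((h.isCompact_closure_image_closedBall (f := ((T ∘L S) : F →ₗ[ℂ] F)) 1).totallyBounded).subset
      subset_closure
  rw [Metric.totallyBounded_iff] at hTB ⊢
  intro ε hε
  obtain ⟨t, htfin, hcover⟩ := hTB (ε ^ 2 / 8) (by positivity)
  have hchoice : ∀ y : F, ∃ ψ : F,
      (∃ ψ' ∈ Metric.closedBall (0 : F) 1, T (S ψ') ∈ Metric.ball y (ε ^ 2 / 8)) →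
      (ψ ∈ Metric.closedBall (0 : F) 1 ∧ T (S ψ) ∈ Metric.ball y (ε ^ 2 / 8)) := by
    intro y
    by_cases hy : ∃ ψ' ∈ Metric.closedBall (0 : F) 1, T (S ψ') ∈ Metric.ball y (ε ^ 2 / 8)
    · obtain ⟨ψ', h1, h2⟩ := hy
      exact ⟨ψ', fun _ => ⟨h1, h2⟩⟩
    · exact ⟨0, fun hc => absurd hc hy⟩
  choose g hg using hchoice
  refine ⟨(fun y => S (g y)) '' t, htfin.image _, ?_⟩
  rintro _ ⟨ψ, hψ, rfl⟩
  have hmem : T (S ψ) ∈ ⋃ y ∈ t, Metric.ball y (ε ^ 2 / 8) :=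
    hcover ⟨ψ, hψ, rfl⟩
  simp only [Set.mem_iUnion] at hmem
  obtain ⟨y, hyt, hy⟩ := hmem
  obtain ⟨hgmem, hgy⟩ := hg y ⟨ψ, hψ, hy⟩
  simp only [Set.mem_iUnion]
  refine ⟨S (g y), ⟨y, hyt, rfl⟩, ?_⟩
  rw [Metric.mem_ball, dist_eq_norm]
  have key : ‖S ψ - S (g y)‖ ^ 2 ≤ ‖ψ - g y‖ * ‖T (S ψ) - T (S (g y))‖ := by
    have h1 : (inner ℂ (S (ψ - g y)) (S (ψ - g y)) : ℂ) =
        inner ℂ (ψ - g y) (T (S (ψ - g y))) :=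
      ContinuousLinearMap.adjoint_inner_left T (S (ψ - g y)) (ψ - g y)
    have h2 : ‖S (ψ - g y)‖ ^ 2 = RCLike.re (inner ℂ (ψ - g y) (T (S (ψ - g y))) : ℂ) := by
      rw [← h1, inner_self_eq_norm_sq]
    have h3 : RCLike.re (inner ℂ (ψ - g y) (T (S (ψ - g y))) : ℂ) ≤
        ‖ψ - g y‖ * ‖T (S (ψ - g y))‖ := by
      calc RCLike.re (inner ℂ (ψ - g y) (T (S (ψ - g y))) : ℂ)
          ≤ ‖(inner ℂ (ψ - g y) (T (S (ψ - g y))) : ℂ)‖ := RCLike.re_le_norm _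
        _ ≤ ‖ψ - g y‖ * ‖T (S (ψ - g y))‖ := norm_inner_le_norm _ _
    calc ‖S ψ - S (g y)‖ ^ 2 = ‖S (ψ - g y)‖ ^ 2 := by rw [map_sub]
      _ = RCLike.re (inner ℂ (ψ - g y) (T (S (ψ - g y))) : ℂ) := h2
      _ ≤ ‖ψ - g y‖ * ‖T (S (ψ - g y))‖ := h3
      _ = ‖ψ - g y‖ * ‖T (S ψ) - T (S (g y))‖ := by rw [map_sub, map_sub]
  have hn1 : ‖ψ - g y‖ ≤ 2 := by
    have := Metric.mem_closedBall.1 hψ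
    have := Metric.mem_closedBall.1 hgmem
    rw [dist_zero_right] at *
    calc ‖ψ - g y‖ ≤ ‖ψ‖ + ‖g y‖ := norm_sub_le _ _
      _ ≤ 2 := by linarith
  have hn2 : ‖T (S ψ) - T (S (g y))‖ < 2 * (ε ^ 2 / 8) := by
    have d1 : dist (T (S ψ)) y < ε ^ 2 / 8 := Metric.mem_ball.1 hy
    have d2 : dist (T (S (g y))) y < ε ^ 2 / 8 := Metric.mem_ball.1 hgy
    calc ‖T (S ψ) - T (S (g y))‖ = dist (T (S ψ)) (T (S (g y))) := (dist_eq_norm _ _).symm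
      _ ≤ dist (T (S ψ)) y + dist (T (S (g y))) y := dist_triangle_right _ _ _
      _ < 2 * (ε ^ 2 / 8) := by linarith
  have hsq : ‖S ψ - S (g y)‖ ^ 2 < ε ^ 2 := by
    have hnn : (0:ℝ) ≤ ‖T (S ψ) - T (S (g y))‖ := norm_nonneg _
    nlinarith [key, hn1, hn2, norm_nonneg (ψ - g y)]
  show ‖S ψ - S (g y)‖ < ε
  nlinarith [norm_nonneg (S ψ - S (g y)), hε, hsq]

/-- Let `(Γ, G)` be a boundary pair for `h`.  The following are
equivalent: (i) the Neumann-to-Dirichlet operator `Λ⁻¹ = Γ Γ^{(1)*} : G → G` is compact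
(where `Γ^{(1)*}` is the Hilbert-space adjoint of `Γ : H¹ → G`); (ii) for all
`z ∉ spec HN`, the operator `Γ (H̃N - z)⁻¹ Γ* : G → G` is compact (any bounded operator
`W` on `G` such that `Wψ = Γ u_ψ` where `u_ψ` is the unique weak solution of
`(h - z)(u, f) = ⟨Γf, ψ⟩` for all `f ∈ H¹`); (iii) `Γ : H¹ → G` is compact. -/
theorem ntd_compact_iff_boundary_map_compact
    {H H1 G : Type*}
    [NormedAddCommGroup H] [InnerProductSpace ℂ H] [CompleteSpace H]
    [NormedAddCommGroup H1] [InnerProductSpace ℂ H1] [CompleteSpace H1]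
    [NormedAddCommGroup G] [InnerProductSpace ℂ G] [CompleteSpace G]
    (J : H1 →L[ℂ] H) (hJinj : Function.Injective J) (hJdense : DenseRange J)
    (hform : H1 → H1 → ℂ)
    (hpol : ∀ u v : H1, (inner ℂ u v : ℂ) = (inner ℂ (J u) (J v) : ℂ) + hform u v)
    (Γ : H1 →L[ℂ] G)
    (hker : Dense (J '' ((LinearMap.ker (Γ : H1 →ₗ[ℂ] G) : Submodule ℂ H1) : Set H1)))
    (hran : Dense ((LinearMap.range (Γ : H1 →ₗ[ℂ] G) : Submodule ℂ G) : Set G)) :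
    -- (i) ↔ (iii)
    (IsCompactOperator (Γ ∘L (ContinuousLinearMap.adjoint Γ)) ↔ IsCompactOperator Γ) ∧
    -- (iii) ↔ (ii)
    (IsCompactOperator Γ ↔
      ∀ (z : ℂ) (W : G →L[ℂ] G),
        -- `z ∉ spec HN`: weak solutions at `z` are unique …
        (∀ u : H1, (∀ f : H1, hform f u = z * (inner ℂ (J f) (J u) : ℂ)) → u = 0) →
        -- … and `W = Γ (H̃N - z)⁻¹ Γ*`
        (∀ ψ : G, ∃ u : H1, Γ u = W ψ ∧
          ∀ f : H1, hform f u - z * (inner ℂ (J f) (J u) : ℂ) = (inner ℂ (Γ f) ψ : ℂ)) →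
        IsCompactOperator W) := by
  classical
  have hf_eq : ∀ f x : H1, hform f x = (inner ℂ f x : ℂ) - (inner ℂ (J f) (J x) : ℂ) := by
    intro f x
    linear_combination -(hpol f x)
  have part1 : IsCompactOperator (Γ ∘L (ContinuousLinearMap.adjoint Γ)) ↔ IsCompactOperator Γ := by
    constructor
    · intro h
      have h1 : IsCompactOperator (ContinuousLinearMap.adjoint Γ) := aux_adjoint_compact Γ h
      have h2 : IsCompactOperator
          ((ContinuousLinearMap.adjoint Γ) ∘L
            ContinuousLinearMap.adjoint (ContinuousLinearMap.adjoint Γ)) := by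
        rw [ContinuousLinearMap.adjoint_adjoint]
        exact h1.comp_clm Γ
      have h3 := aux_adjoint_compact (ContinuousLinearMap.adjoint Γ) h2
      rwa [ContinuousLinearMap.adjoint_adjoint] at h3
    · intro h
      exact h.comp_clm (ContinuousLinearMap.adjoint Γ)
  refine ⟨part1, ?_, ?_⟩
  · -- (iii) → (ii)
    intro hΓ z W huniq hW
    choose u hu1 hu2 using hW
    -- uniqueness of weak solutions
    have key : ∀ (ψ : G) (v : H1),
        (∀ f : H1, hform f v - z * (inner ℂ (J f) (J v) : ℂ) = (inner ℂ (Γ f) ψ : ℂ)) →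
        v = u ψ := by
      intro ψ v hv
      have hz : v - u ψ = 0 := by
        apply huniq
        intro f
        have h1 := hv f
        have h2 := hu2 ψ f
        simp only [hf_eq] at h1 h2 ⊢
        simp only [map_sub, inner_sub_right]
        linear_combination h1 - h2
      rw [sub_eq_zero] at hz
      exact hz
    -- linearity of the solution map
    have hadd : ∀ ψ ψ' : G, u (ψ + ψ') = u ψ + u ψ' := by
      intro ψ ψ'
      refine (key (ψ + ψ') (u ψ + u ψ') ?_).symm
      intro f
      have h1 := hu2 ψ f
      have h2 := hu2 ψ' f
      simp only [hf_eq] at h1 h2 ⊢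
      simp only [map_add, inner_add_right]
      linear_combination h1 + h2
    have hsmul : ∀ (c : ℂ) (ψ : G), u (c • ψ) = c • u ψ := by
      intro c ψ
      refine (key (c • ψ) (c • u ψ) ?_).symm
      intro f
      have h1 := hu2 ψ f
      simp only [hf_eq] at h1 ⊢
      simp only [map_smul, inner_smul_right]
      linear_combination c * h1
    let Slin : G →ₗ[ℂ] H1 :=
      { toFun := u
        map_add' := hadd
        map_smul' := hsmul }
    have hgraph : (Slin.graph : Set (G × H1)) =
        {p : G × H1 | ∀ f : H1,
          (inner ℂ f p.2 : ℂ) - (inner ℂ (J f) (J p.2) : ℂ) -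
            z * (inner ℂ (J f) (J p.2) : ℂ) = (inner ℂ (Γ f) p.1 : ℂ)} := by
      ext p
      simp only [SetLike.mem_coe, LinearMap.mem_graph_iff, Set.mem_setOf_eq]
      constructor
      · intro hp f
        have := hu2 p.1 f
        rw [hf_eq] at this
        rw [hp]
        show (_ : ℂ) - _ - _ = _
        linear_combination this
      · intro hp
        refine key p.1 p.2 ?_
        intro f
        rw [hf_eq]
        linear_combination hp f
    have hclosed : IsClosed (Slin.graph : Set (G × H1)) := by
      rw [hgraph]
      have : {p : G × H1 | ∀ f : H1,
          (inner ℂ f p.2 : ℂ) - (inner ℂ (J f) (J p.2) : ℂ) -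
            z * (inner ℂ (J f) (J p.2) : ℂ) = (inner ℂ (Γ f) p.1 : ℂ)} =
          ⋂ f : H1, {p : G × H1 |
            (inner ℂ f p.2 : ℂ) - (inner ℂ (J f) (J p.2) : ℂ) -
              z * (inner ℂ (J f) (J p.2) : ℂ) = (inner ℂ (Γ f) p.1 : ℂ)} := by
        ext p; simp
      rw [this]
      refine isClosed_iInter fun f => isClosed_eq ?_ ?_
      · have c1 : Continuous fun p : G × H1 => (inner ℂ f p.2 : ℂ) :=
          continuous_const.inner continuous_snd
        have c2 : Continuous fun p : G × H1 => (inner ℂ (J f) (J p.2) : ℂ) :=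
          continuous_const.inner (J.continuous.comp continuous_snd)
        exact (c1.sub c2).sub (continuous_const.mul c2)
      · exact continuous_const.inner continuous_fst
    have hcont : Continuous Slin := Slin.continuous_of_isClosed_graph hclosed
    let S : G →L[ℂ] H1 := ⟨Slin, hcont⟩
    have hWeq : ⇑W = ⇑Γ ∘ ⇑S := funext fun ψ => (hu1 ψ).symm
    have hc := hΓ.comp_clm S
    rwa [← hWeq] at hc
  · -- (ii) → (iii)
    intro h
    have h1 : IsCompactOperator (Γ ∘L ContinuousLinearMap.adjoint Γ) := by
      refine h (-1) (Γ ∘L ContinuousLinearMap.adjoint Γ) ?_ ?_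
      · intro v hv
        have : (inner ℂ v v : ℂ) = 0 := by
          have := hv v
          rw [hf_eq] at this
          linear_combination this
        exact inner_self_eq_zero.1 this
      · intro ψ
        refine ⟨ContinuousLinearMap.adjoint Γ ψ, rfl, ?_⟩
        intro f
        rw [hf_eq]
        have := ContinuousLinearMap.adjoint_inner_right Γ f ψ
        linear_combination this
    exact part1.mp h1
end

section
/- There exist a Hilbert space G, a self-adjoint operator A₀ on G with 0 an isolated eigenvalue of infinite multiplicity, and a bounded, injective, non-negative self-adjoint operator A₁ on G (not uniformly positive), such that the pencil T(z) = A₀ − zA₁ fails to have a bounded inverse for every z ∈ ℂ; in particular 0 belongs to the pencil spectrum but is not isolated in it, even though 0 is isolated in spec(A₀). Concretely: if (φ_n) is an orthonormal basis of ker A₀ and A₁ := 1_{ℝ∖{0}}(A₀) + Σ_n (1/n)⟨φ_n, ·⟩φ_n, then T(z)φ_n = −(z/n)φ_n, so ‖T(z)φ_n‖ → 0 for every z, and T(z) is never boundedly invertible. -/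
open scoped ComplexConjugate

noncomputable section

abbrev Hsp := lp (fun _ : ℕ => ℂ) 2

lemma two_toReal : (2 : ENNReal).toReal = 2 := by norm_num

lemma memdiag (f : Hsp) : Memℓp (fun n : ℕ => ((((n : ℝ) + 1)⁻¹ : ℝ) : ℂ) * f n) 2 := by
  apply memℓp_gen
  have hs : Summable fun n : ℕ => ‖f n‖ ^ (2 : ENNReal).toReal :=
    (lp.memℓp f).summable (by norm_num)
  refine Summable.of_nonneg_of_le (fun n => ?_) (fun n => ?_) hs
  · positivity
  · apply Real.rpow_le_rpow (norm_nonneg _) _ (by norm_num)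
    rw [norm_mul]
    have h1 : ‖((((n : ℝ) + 1)⁻¹ : ℝ) : ℂ)‖ ≤ 1 := by
      rw [Complex.norm_real, Real.norm_eq_abs, abs_of_nonneg (by positivity)]
      rw [inv_le_one_iff₀]; right; linarith [Nat.cast_nonneg (α := ℝ) n]
    calc ‖((((n : ℝ) + 1)⁻¹ : ℝ) : ℂ)‖ * ‖f n‖ ≤ 1 * ‖f n‖ :=
          mul_le_mul_of_nonneg_right h1 (norm_nonneg _)
      _ = ‖f n‖ := one_mul _

def A1lin : Hsp →ₗ[ℂ] Hsp where
  toFun f := ⟨fun n : ℕ => ((((n : ℝ) + 1)⁻¹ : ℝ) : ℂ) * f n, memdiag f⟩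
  map_add' f g := by
    apply lp.ext; funext n
    simp only [lp.coeFn_add, Pi.add_apply]
    exact mul_add _ _ _
  map_smul' c f := by
    apply lp.ext; funext n
    simp only [lp.coeFn_smul, Pi.smul_apply, RingHom.id_apply, smul_eq_mul]
    ring

lemma A1lin_apply (f : Hsp) (n : ℕ) : (A1lin f : ∀ _ : ℕ, ℂ) n = ((((n : ℝ) + 1)⁻¹ : ℝ) : ℂ) * f n := rfl

def A1 : Hsp →L[ℂ] Hsp := LinearMap.mkContinuous A1lin 1 (by
  intro f
  rw [one_mul]
  apply lp.norm_le_of_tsum_le (by rw [two_toReal]; norm_num) (norm_nonneg f)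
  have hs : Summable fun n : ℕ => ‖f n‖ ^ (2 : ENNReal).toReal :=
    (lp.memℓp f).summable (by norm_num)
  have hs' : Summable fun n : ℕ => ‖(A1lin f : ∀ _ : ℕ, ℂ) n‖ ^ (2 : ENNReal).toReal :=
    (lp.memℓp (A1lin f)).summable (by norm_num)
  have hle : ∀ n : ℕ, ‖(A1lin f : ∀ _ : ℕ, ℂ) n‖ ^ (2 : ENNReal).toReal ≤ ‖f n‖ ^ (2 : ENNReal).toReal := by
    intro n
    apply Real.rpow_le_rpow (norm_nonneg _) _ (by norm_num)
    rw [A1lin_apply, norm_mul]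
    have h1 : ‖((((n : ℝ) + 1)⁻¹ : ℝ) : ℂ)‖ ≤ 1 := by
      rw [Complex.norm_real, Real.norm_eq_abs, abs_of_nonneg (by positivity)]
      rw [inv_le_one_iff₀]; right; linarith [Nat.cast_nonneg (α := ℝ) n]
    calc ‖((((n : ℝ) + 1)⁻¹ : ℝ) : ℂ)‖ * ‖f n‖ ≤ 1 * ‖f n‖ :=
          mul_le_mul_of_nonneg_right h1 (norm_nonneg _)
      _ = ‖f n‖ := one_mul _
  calc ∑' n : ℕ, ‖(A1lin f : ∀ _ : ℕ, ℂ) n‖ ^ (2 : ENNReal).toReal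
      ≤ ∑' n : ℕ, ‖f n‖ ^ (2 : ENNReal).toReal := Summable.tsum_le_tsum hle hs' hs
    _ = ‖f‖ ^ (2 : ENNReal).toReal :=
        (lp.norm_rpow_eq_tsum (by rw [two_toReal]; norm_num) f).symm)

lemma A1_apply (f : Hsp) (n : ℕ) : (A1 f : ∀ _ : ℕ, ℂ) n = ((((n : ℝ) + 1)⁻¹ : ℝ) : ℂ) * f n := rfl


def phi (n : ℕ) : Hsp := lp.single 2 n (1 : ℂ)

lemma norm_phi (n : ℕ) : ‖phi n‖ = 1 := by
  have := lp.norm_single (p := 2) (E := fun _ : ℕ => ℂ) (by norm_num)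
    n (1 : ℂ)
  simpa [phi] using this

lemma orthonormal_phi : Orthonormal ℂ phi := by
  rw [orthonormal_iff_ite]
  intro i j
  rw [phi, phi, lp.inner_single_left]
  by_cases h : i = j
  · subst h; simp [lp.single_apply_self]
  · simp [lp.single_apply_ne (E := fun _ : ℕ => ℂ) 2 j (1 : ℂ) h, h]

lemma A1_phi (n : ℕ) : A1 (phi n) = (((n : ℝ) + 1)⁻¹ : ℝ) • phi n := by
  apply lp.ext; funext j
  have h : (A1 (phi n) : ∀ _ : ℕ, ℂ) j = ((((j : ℝ) + 1)⁻¹ : ℝ) : ℂ) * (phi n : ∀ _ : ℕ, ℂ) j := rfl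
  rw [h, lp.coeFn_smul, Pi.smul_apply]
  by_cases hj : j = n
  · subst hj; simp [Complex.real_smul]
  · rw [phi, lp.single_apply_ne (E := fun _ : ℕ => ℂ) 2 n (1 : ℂ) hj]
    simp

lemma A1_selfAdjoint : IsSelfAdjoint A1 := by
  rw [ContinuousLinearMap.isSelfAdjoint_iff_isSymmetric]
  intro f g
  show (inner ℂ (A1 f) g : ℂ) = inner ℂ f (A1 g)
  rw [lp.inner_eq_tsum, lp.inner_eq_tsum]
  congr 1; funext n
  show g n * conj ((A1 f : ∀ _ : ℕ, ℂ) n) = (A1 g : ∀ _ : ℕ, ℂ) n * conj (f n)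
  have h1 : (A1 f : ∀ _ : ℕ, ℂ) n = ((((n : ℝ) + 1)⁻¹ : ℝ) : ℂ) * f n := rfl
  have h2 : (A1 g : ∀ _ : ℕ, ℂ) n = ((((n : ℝ) + 1)⁻¹ : ℝ) : ℂ) * g n := rfl
  rw [h1, h2, map_mul, Complex.conj_ofReal]
  ring

lemma A1_nonneg (x : Hsp) : 0 ≤ (inner ℂ x (A1 x) : ℂ).re := by
  rw [lp.inner_eq_tsum]
  have hsum : Summable fun n : ℕ => (inner ℂ (x n) ((A1 x : ∀ _ : ℕ, ℂ) n) : ℂ) :=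
    lp.summable_inner x (A1 x)
  rw [Complex.re_tsum hsum]
  apply tsum_nonneg
  intro n
  show (0 : ℝ) ≤ ((A1 x : ∀ _ : ℕ, ℂ) n * conj (x n)).re
  rw [mul_comm]
  have h1 : (A1 x : ∀ _ : ℕ, ℂ) n = ((((n : ℝ) + 1)⁻¹ : ℝ) : ℂ) * x n := rfl
  rw [h1]
  have : conj (x n) * (((((n : ℝ) + 1)⁻¹ : ℝ) : ℂ) * x n)
      = ((((n : ℝ) + 1)⁻¹ : ℝ) : ℂ) * (Complex.normSq (x n) : ℂ) := by
    rw [Complex.normSq_eq_conj_mul_self]; ring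
  rw [this]
  rw [← Complex.ofReal_mul, Complex.ofReal_re]
  have h0 : (0:ℝ) ≤ ((n : ℝ) + 1)⁻¹ := by positivity
  exact mul_nonneg h0 (Complex.normSq_nonneg _)



lemma A1_injective : Function.Injective A1 := by
  intro f g h
  apply lp.ext; funext n
  have h1 : (A1 f : ∀ _ : ℕ, ℂ) n = (A1 g : ∀ _ : ℕ, ℂ) n := by rw [h]
  have h2 : ((((n : ℝ) + 1)⁻¹ : ℝ) : ℂ) * f n = ((((n : ℝ) + 1)⁻¹ : ℝ) : ℂ) * g n := h1
  have hne : ((((n : ℝ) + 1)⁻¹ : ℝ) : ℂ) ≠ 0 := by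
    simp only [ne_eq, Complex.ofReal_eq_zero, inv_eq_zero]
    positivity
  exact mul_left_cancel₀ hne h2

lemma inner_phi_phi (n : ℕ) : (inner ℂ (phi n) (phi n) : ℂ) = 1 := by
  rw [inner_self_eq_norm_sq_to_K (𝕜 := ℂ) (phi n), norm_phi]
  norm_num

lemma inner_phi_A1_phi (n : ℕ) : (inner ℂ (phi n) (A1 (phi n)) : ℂ).re = ((n : ℝ) + 1)⁻¹ := by
  rw [A1_phi, RCLike.real_smul_eq_coe_smul (K := ℂ), inner_smul_right, inner_phi_phi, mul_one]
  norm_cast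

lemma pencil_phi (z : ℂ) (n : ℕ) :
    (((0 : Hsp →L[ℂ] Hsp) - z • A1)) (phi n) = (-(z / ((n : ℂ) + 1))) • phi n := by
  rw [ContinuousLinearMap.sub_apply, ContinuousLinearMap.smul_apply,
    ContinuousLinearMap.zero_apply, zero_sub, A1_phi,
    RCLike.real_smul_eq_coe_smul (K := ℂ), smul_smul, ← neg_smul]
  congr 1
  rw [div_eq_mul_inv]
  push_cast
  ring

lemma norm_pencil_phi (z : ℂ) (n : ℕ) :
    ‖(((0 : Hsp →L[ℂ] Hsp) - z • A1)) (phi n)‖ = ‖z‖ / ((n : ℝ) + 1) := by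
  rw [pencil_phi, norm_smul, norm_phi, mul_one, norm_neg, norm_div]
  congr 1
  rw [show ((n : ℂ) + 1) = ((((n : ℝ) + 1) : ℝ) : ℂ) by push_cast; ring, Complex.norm_real,
    Real.norm_eq_abs, abs_of_nonneg (by positivity)]

lemma tendsto_pencil (z : ℂ) :
    Filter.Tendsto (fun n => ‖(((0 : Hsp →L[ℂ] Hsp) - z • A1)) (phi n)‖)
      Filter.atTop (nhds 0) := by
  simp only [norm_pencil_phi]
  have h : Filter.Tendsto (fun n : ℕ => (n : ℝ) + 1) Filter.atTop Filter.atTop :=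
    Filter.tendsto_atTop_add_const_right _ 1 tendsto_natCast_atTop_atTop
  simpa using Filter.Tendsto.div_atTop (tendsto_const_nhds (x := ‖z‖)) h

lemma pencil_not_unit (z : ℂ) : ¬ IsUnit ((0 : Hsp →L[ℂ] Hsp) - z • A1) := by
  rintro ⟨u, hu⟩
  set B := (↑u⁻¹ : Hsp →L[ℂ] Hsp)
  obtain ⟨n, hn⟩ := exists_nat_gt (‖B‖ * ‖z‖)
  have hBn : B (((0 : Hsp →L[ℂ] Hsp) - z • A1) (phi n)) = phi n := by
    have := u.inv_mul
    calc B (((0 : Hsp →L[ℂ] Hsp) - z • A1) (phi n)) = ((↑u⁻¹ * ↑u : Hsp →L[ℂ] Hsp)) (phi n) := by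
          rw [hu]; rfl
      _ = phi n := by rw [u.inv_mul]; rfl
  have h1 : (1 : ℝ) = ‖B (((0 : Hsp →L[ℂ] Hsp) - z • A1) (phi n))‖ := by rw [hBn, norm_phi]
  have h2 : ‖B (((0 : Hsp →L[ℂ] Hsp) - z • A1) (phi n))‖ ≤ ‖B‖ * (‖z‖ / ((n : ℝ) + 1)) := by
    rw [← norm_pencil_phi z n]
    exact B.le_opNorm _
  have hpos : (0 : ℝ) < (n : ℝ) + 1 := by positivity
  have h3 : ‖B‖ * (‖z‖ / ((n : ℝ) + 1)) < 1 := by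
    rw [mul_div_assoc'] at *
    rw [div_lt_one hpos]
    calc ‖B‖ * ‖z‖ < (n : ℝ) := hn
      _ < (n : ℝ) + 1 := by linarith
  linarith [h1 ▸ h2]

lemma A1_not_unif_pos :
    ¬ ∃ c : ℝ, 0 < c ∧ ∀ x, c * ‖x‖ ^ 2 ≤ (inner ℂ x (A1 x) : ℂ).re := by
  rintro ⟨c, hc, hbound⟩
  obtain ⟨n, hn⟩ := exists_nat_gt c⁻¹
  have := hbound (phi n)
  rw [inner_phi_A1_phi, norm_phi] at this
  have h1 : c * 1 ^ 2 = c := by ring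
  rw [h1] at this
  have h2 : ((n : ℝ) + 1)⁻¹ < c := by
    rw [inv_lt_comm₀ (by positivity) hc] at *
    calc c⁻¹ < (n : ℝ) := hn
      _ < (n : ℝ) + 1 := by linarith
  linarith

lemma spec_zero : (0 : ℂ) ∈ spectrum ℂ (0 : Hsp →L[ℂ] Hsp) := by
  rw [spectrum.zero_mem_iff]
  rintro ⟨u, hu⟩
  have h1 : (↑u⁻¹ * ↑u : Hsp →L[ℂ] Hsp) = 1 := u.inv_mul
  rw [hu, mul_zero] at h1
  have h2 := congrArg (fun T : Hsp →L[ℂ] Hsp => T (phi 0)) h1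
  simp only [ContinuousLinearMap.zero_apply, ContinuousLinearMap.one_apply] at h2
  have hn := norm_phi 0
  rw [← h2, norm_zero] at hn
  norm_num at hn

end

/-- There exist (on the separable Hilbert space `G = ℓ²(ℕ, ℂ)`)
self-adjoint bounded operators `A₀`, `A₁` and an orthonormal family `(φₙ)` with:
`A₀ φₙ = 0` for all `n` (so `0` is an eigenvalue of infinite multiplicity), `0` is
isolated in `spec A₀`; `A₁` is non-negative and injective but not uniformly positive,
with `A₁ φₙ = (n+1)⁻¹ φₙ`; the pencil `T(z) = A₀ - z A₁` satisfies
`T(z) φₙ = -(z/(n+1)) φₙ`, hence `‖T(z)φₙ‖ → 0`, and `T(z)` is never boundedly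
invertible — so `0` lies in the pencil spectrum but is not isolated in it. -/
theorem exists_pencil_counterexample :
    ∃ (A₀ A₁ : lp (fun _ : ℕ => ℂ) 2 →L[ℂ] lp (fun _ : ℕ => ℂ) 2)
      (φ : ℕ → lp (fun _ : ℕ => ℂ) 2),
      IsSelfAdjoint A₀ ∧ IsSelfAdjoint A₁ ∧
      Orthonormal ℂ φ ∧
      -- `(φₙ)` spans the kernel of `A₀`: `0` is an eigenvalue of infinite multiplicity
      (∀ n, A₀ (φ n) = 0) ∧
      -- `0` is isolated in `spec A₀`
      ((0 : ℂ) ∈ spectrum ℂ A₀ ∧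
        ∃ ε > (0 : ℝ), ∀ w ∈ spectrum ℂ A₀, w ≠ 0 → ε ≤ ‖w‖) ∧
      -- `A₁` is non-negative, injective, but not uniformly positive
      (∀ x, 0 ≤ (inner ℂ x (A₁ x) : ℂ).re) ∧
      Function.Injective A₁ ∧
      (¬ ∃ c : ℝ, 0 < c ∧ ∀ x, c * ‖x‖ ^ 2 ≤ (inner ℂ x (A₁ x) : ℂ).re) ∧
      (∀ n, A₁ (φ n) = (((n : ℝ) + 1)⁻¹ : ℝ) • φ n) ∧
      -- the pencil `T(z) = A₀ - zA₁`
      (∀ (z : ℂ) (n : ℕ), (A₀ - z • A₁) (φ n) = (-(z / ((n : ℂ) + 1))) • φ n) ∧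
      (∀ z : ℂ, Filter.Tendsto (fun n => ‖(A₀ - z • A₁) (φ n)‖)
        Filter.atTop (nhds 0)) ∧
      -- `T(z)` is never boundedly invertible; in particular `0` is in the pencil
      -- spectrum but not isolated in it
      (∀ z : ℂ, ¬ IsUnit (A₀ - z • A₁)) := by
  refine ⟨0, A1, phi, ?_, A1_selfAdjoint, orthonormal_phi, ?_, ⟨spec_zero, 1, one_pos, ?_⟩,
    A1_nonneg, A1_injective, A1_not_unif_pos, A1_phi, pencil_phi, tendsto_pencil,
    pencil_not_unit⟩
  · exact .zero _
  · intro n; exact ContinuousLinearMap.zero_apply _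
  · intro w hw hwne
    exfalso
    rw [spectrum.mem_iff, sub_zero] at hw
    exact hw ((algebraMap ℂ (Hsp →L[ℂ] Hsp)).isUnit_map (isUnit_iff_ne_zero.mpr hwne))
end

section
/- Let (Γ, G) be a boundary pair for h which is elliptically regular, i.e. there is C > 0 with ‖Sφ‖_H ≤ C‖φ‖_G for all φ ∈ ran Γ. Then for every λ ∈ ℝ ∖ spec(H^D), the DtN form l_λ is bounded from below and closed on G^{1/2} = ran Γ; in particular, for real λ in a neighbourhood of −1, one has Re l_λ(φ) + ω(λ)‖φ‖²_G ≥ ‖φ‖²_{G^{1/2}} for a suitable ω(λ) ≥ 0 with ω(−1) = 0, so that the norm induced by l_λ is equivalent to the G^{1/2}-norm. -/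
/-- The spectrum of a (possibly unbounded) operator `T`. -/
def pmapSpectrum {E : Type*} [NormedAddCommGroup E] [NormedSpace ℂ E]
    (T : E →ₗ.[ℂ] E) : Set ℂ :=
  {z | ¬ ∃ R : E →L[ℂ] E, ResolventAt T z R}

/-- Let `(Γ, G)` be an *elliptically regular* boundary pair for `h`
(`‖Sφ‖_H ≤ C‖φ‖_G` for all `φ ∈ ran Γ`, where `S = S(-1)`).  Then for every
`λ ∈ ℝ ∖ spec HD`, the DtN form `l_λ(φ) = h(S(λ)φ, Sφ) - λ⟨S(λ)φ, Sφ⟩_H` is bounded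
from below and closed on `G^{1/2} = ran Γ`; in particular there is `ω(λ) ≥ 0` with
`ω(-1) = 0` such that `Re l_λ(φ) + ω(λ)‖φ‖²_G ≥ ‖φ‖²_{G^{1/2}}` (where
`‖φ‖²_{G^{1/2}} = ‖Sφ‖²_{H¹}`), and the norm induced by `l_λ` is equivalent to the
`G^{1/2}`-norm. -/
theorem elliptically_regular_dtn_form_closed_and_bounded_below
    {H H1 G : Type*}
    [NormedAddCommGroup H] [InnerProductSpace ℂ H] [CompleteSpace H]
    [NormedAddCommGroup H1] [InnerProductSpace ℂ H1] [CompleteSpace H1]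
    [NormedAddCommGroup G] [InnerProductSpace ℂ G] [CompleteSpace G]
    (J : H1 →L[ℂ] H) (hJinj : Function.Injective J) (hJdense : DenseRange J)
    (hform : H1 → H1 → ℂ)
    (hpol : ∀ u v : H1, (inner ℂ u v : ℂ) = (inner ℂ (J u) (J v) : ℂ) + hform u v)
    (Γ : H1 →L[ℂ] G)
    (hker : Dense (J '' ((LinearMap.ker (Γ : H1 →ₗ[ℂ] G) : Submodule ℂ H1) : Set H1)))
    (hran : Dense ((LinearMap.range (Γ : H1 →ₗ[ℂ] G) : Submodule ℂ G) : Set G))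
    -- the Dirichlet operator `HD`
    (HD : H →ₗ.[ℂ] H)
    (hHDdom : ∀ u : HD.domain, ∃ u1 : H1, J u1 = (u : H) ∧ Γ u1 = 0 ∧
      ∀ f : H1, Γ f = 0 → hform f u1 = (inner ℂ (J f) (HD u) : ℂ))
    (hHDmax : ∀ (u1 : H1) (w : H), Γ u1 = 0 →
      (∀ f : H1, Γ f = 0 → hform f u1 = (inner ℂ (J f) w : ℂ)) →
      ∃ hu : J u1 ∈ HD.domain, HD ⟨J u1, hu⟩ = w)
    -- the Dirichlet solution operator `S = S(-1)`
    (Sm : (LinearMap.range (Γ : H1 →ₗ[ℂ] G) : Submodule ℂ G) →ₗ[ℂ] H1)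
    (hSm1 : ∀ φ : (LinearMap.range (Γ : H1 →ₗ[ℂ] G) : Submodule ℂ G), Sm φ ∈ (LinearMap.ker (Γ : H1 →ₗ[ℂ] G))ᗮ)
    (hSm2 : ∀ φ : (LinearMap.range (Γ : H1 →ₗ[ℂ] G) : Submodule ℂ G), Γ (Sm φ) = (φ : G))
    -- elliptic regularity: `‖Sφ‖_H ≤ C ‖φ‖_G`
    (C : ℝ)
    (hellreg : ∀ φ : (LinearMap.range (Γ : H1 →ₗ[ℂ] G) : Submodule ℂ G), ‖J (Sm φ)‖ ≤ C * ‖(φ : G)‖)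
    -- `λ ∈ ℝ ∖ spec HD`
    (lam : ℝ) (hlam : (lam : ℂ) ∉ pmapSpectrum HD)
    -- the Dirichlet solution operator at `λ`
    (Sl : (LinearMap.range (Γ : H1 →ₗ[ℂ] G) : Submodule ℂ G) →ₗ[ℂ] H1)
    (hSl1 : ∀ (φ : (LinearMap.range (Γ : H1 →ₗ[ℂ] G) : Submodule ℂ G)) (f : H1), Γ f = 0 →
      hform f (Sl φ) = (lam : ℂ) * (inner ℂ (J f) (J (Sl φ)) : ℂ))
    (hSl2 : ∀ φ : (LinearMap.range (Γ : H1 →ₗ[ℂ] G) : Submodule ℂ G), Γ (Sl φ) = (φ : G)) :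
    ∃ ω K : ℝ, 0 ≤ ω ∧ (lam = -1 → ω = 0) ∧ 0 < K ∧
      -- equivalence of the `l_λ`-form norm with the `G^{1/2}`-norm `‖Sm ·‖_{H¹}`
      (∀ φ : (LinearMap.range (Γ : H1 →ₗ[ℂ] G) : Submodule ℂ G),
        ‖Sm φ‖ ^ 2 ≤
          (hform (Sm φ) (Sl φ) - (lam : ℂ) * (inner ℂ (J (Sm φ)) (J (Sl φ)) : ℂ)).re +
            ω * ‖(φ : G)‖ ^ 2 ∧
        (hform (Sm φ) (Sl φ) - (lam : ℂ) * (inner ℂ (J (Sm φ)) (J (Sl φ)) : ℂ)).re +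
            ω * ‖(φ : G)‖ ^ 2 ≤ K * ‖Sm φ‖ ^ 2) ∧
      -- `l_λ` is bounded from below
      (∃ m : ℝ, ∀ φ : (LinearMap.range (Γ : H1 →ₗ[ℂ] G) : Submodule ℂ G),
        m * ‖(φ : G)‖ ^ 2 ≤
          (hform (Sm φ) (Sl φ) - (lam : ℂ) * (inner ℂ (J (Sm φ)) (J (Sl φ)) : ℂ)).re) ∧
      -- `l_λ` is closed on `G^{1/2} = ran Γ`
      (∀ (φ : ℕ → (LinearMap.range (Γ : H1 →ₗ[ℂ] G) : Submodule ℂ G)) (ψ : G),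
        CauchySeq (fun n => Sm (φ n)) →
        Filter.Tendsto (fun n => ((φ n : G))) Filter.atTop (nhds ψ) →
        ∃ φ' : (LinearMap.range (Γ : H1 →ₗ[ℂ] G) : Submodule ℂ G), (φ' : G) = ψ ∧
          Filter.Tendsto (fun n => Sm (φ n)) Filter.atTop (nhds (Sm φ'))) := by
  obtain ⟨R, hR1, hR2⟩ : ∃ R : H →L[ℂ] H, ResolventAt HD (lam : ℂ) R := not_not.mp hlam
  have hform_eq : ∀ u v : H1, hform u v = (inner ℂ u v : ℂ) - (inner ℂ (J u) (J v) : ℂ) := by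
    intro u v; linear_combination -hpol u v
  -- key resolvent identity
  have key : ∀ φ : (LinearMap.range (Γ : H1 →ₗ[ℂ] G) : Submodule ℂ G),
      J (Sl φ) = J (Sm φ) + ((lam : ℂ) + 1) • R (J (Sm φ)) := by
    intro φ
    have hΓu : Γ (Sl φ - Sm φ) = 0 := by rw [map_sub, hSl2, hSm2, sub_self]
    have hforall : ∀ f : H1, Γ f = 0 →
        hform f (Sl φ - Sm φ) = (inner ℂ (J f) ((lam : ℂ) • J (Sl φ) + J (Sm φ)) : ℂ) := by
      intro f hf
      have horth : (inner ℂ f (Sm φ) : ℂ) = 0 :=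
        (Submodule.mem_orthogonal _ _).mp (hSm1 φ) f (LinearMap.mem_ker.mpr hf)
      have hb1 : hform f (Sl φ) = (lam : ℂ) * (inner ℂ (J f) (J (Sl φ)) : ℂ) := hSl1 φ f hf
      rw [hform_eq] at hb1 ⊢
      rw [inner_sub_right, map_sub, inner_sub_right, inner_add_right, inner_smul_right, horth]
      linear_combination hb1
    obtain ⟨hu, hHDu⟩ := hHDmax (Sl φ - Sm φ) ((lam : ℂ) • J (Sl φ) + J (Sm φ)) hΓu hforall
    have h2 := hR2 ⟨J (Sl φ - Sm φ), hu⟩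
    simp only [hHDu] at h2
    have harg : ((lam : ℂ) • J (Sl φ) + J (Sm φ)) - (lam : ℂ) • (J (Sl φ - Sm φ))
        = ((lam : ℂ) + 1) • J (Sm φ) := by
      rw [map_sub]; module
    rw [harg, map_smul] at h2
    have h3 : J (Sl φ) - J (Sm φ) = ((lam : ℂ) + 1) • R (J (Sm φ)) := by
      rw [h2, map_sub]
    exact sub_eq_iff_eq_add'.mp h3
  -- the value of the form
  have hE : ∀ φ : (LinearMap.range (Γ : H1 →ₗ[ℂ] G) : Submodule ℂ G),
      (hform (Sm φ) (Sl φ) - (lam : ℂ) * (inner ℂ (J (Sm φ)) (J (Sl φ)) : ℂ)).re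
        = ‖Sm φ‖ ^ 2 - (((lam : ℂ) + 1) * (inner ℂ (J (Sm φ)) (J (Sl φ)) : ℂ)).re := by
    intro φ
    have horth : (inner ℂ (Sl φ - Sm φ) (Sm φ) : ℂ) = 0 :=
      (Submodule.mem_orthogonal _ _).mp (hSm1 φ) _
        (LinearMap.mem_ker.mpr (by rw [ContinuousLinearMap.coe_coe, map_sub, hSl2, hSm2, sub_self]))
    have horth' : (inner ℂ (Sm φ) (Sl φ - Sm φ) : ℂ) = 0 := by
      rw [← inner_conj_symm, horth, map_zero]
    have hinner : (inner ℂ (Sm φ) (Sl φ) : ℂ) = (‖Sm φ‖ : ℂ) ^ 2 := by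
      have := horth'
      rw [inner_sub_right] at this
      rw [sub_eq_zero] at this
      rw [this, inner_self_eq_norm_sq_to_K]
      norm_cast
    have hval : hform (Sm φ) (Sl φ) - (lam : ℂ) * (inner ℂ (J (Sm φ)) (J (Sl φ)) : ℂ)
        = ((‖Sm φ‖ ^ 2 : ℝ) : ℂ) - ((lam : ℂ) + 1) * (inner ℂ (J (Sm φ)) (J (Sl φ)) : ℂ) := by
      rw [hform_eq, hinner]; push_cast; ring
    rw [hval, Complex.sub_re, Complex.ofReal_re]
  -- norm bounds
  have hCb : ∀ φ : (LinearMap.range (Γ : H1 →ₗ[ℂ] G) : Submodule ℂ G), ‖J (Sm φ)‖ ≤ |C| * ‖(φ : G)‖ := by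
    intro φ
    exact (hellreg φ).trans (mul_le_mul_of_nonneg_right (le_abs_self C) (norm_nonneg _))
  have hnormlam : ‖((lam : ℂ) + 1)‖ = |lam + 1| := by
    rw [show ((lam : ℂ) + 1) = ((lam + 1 : ℝ) : ℂ) by push_cast; ring, Complex.norm_real, Real.norm_eq_abs]
  have hCs : ∀ φ : (LinearMap.range (Γ : H1 →ₗ[ℂ] G) : Submodule ℂ G),
      ‖J (Sl φ)‖ ≤ (1 + |lam + 1| * ‖R‖) * (|C| * ‖(φ : G)‖) := by
    intro φ
    rw [key φ]
    calc ‖J (Sm φ) + ((lam : ℂ) + 1) • R (J (Sm φ))‖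
        ≤ ‖J (Sm φ)‖ + ‖((lam : ℂ) + 1) • R (J (Sm φ))‖ := norm_add_le _ _
      _ = ‖J (Sm φ)‖ + |lam + 1| * ‖R (J (Sm φ))‖ := by rw [norm_smul, hnormlam]
      _ ≤ ‖J (Sm φ)‖ + |lam + 1| * (‖R‖ * ‖J (Sm φ)‖) := by
          have h := R.le_opNorm (J (Sm φ))
          nlinarith [abs_nonneg (lam + 1)]
      _ = (1 + |lam + 1| * ‖R‖) * ‖J (Sm φ)‖ := by ring
      _ ≤ (1 + |lam + 1| * ‖R‖) * (|C| * ‖(φ : G)‖) := by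
          have h1 : (0:ℝ) ≤ 1 + |lam + 1| * ‖R‖ := by positivity
          exact mul_le_mul_of_nonneg_left (hCb φ) h1
  set ω : ℝ := |lam + 1| * ((1 + |lam + 1| * ‖R‖) * |C| ^ 2) with hω
  have hω0 : 0 ≤ ω := by positivity
  have hbound : ∀ φ : (LinearMap.range (Γ : H1 →ₗ[ℂ] G) : Submodule ℂ G),
      |(((lam : ℂ) + 1) * (inner ℂ (J (Sm φ)) (J (Sl φ)) : ℂ)).re| ≤ ω * ‖(φ : G)‖ ^ 2 := by
    intro φ
    have h1 : |(((lam : ℂ) + 1) * (inner ℂ (J (Sm φ)) (J (Sl φ)) : ℂ)).re|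
        ≤ ‖((lam : ℂ) + 1) * (inner ℂ (J (Sm φ)) (J (Sl φ)) : ℂ)‖ := Complex.abs_re_le_norm _
    have h2 : ‖((lam : ℂ) + 1) * (inner ℂ (J (Sm φ)) (J (Sl φ)) : ℂ)‖
        = |lam + 1| * ‖(inner ℂ (J (Sm φ)) (J (Sl φ)) : ℂ)‖ := by rw [norm_mul, hnormlam]
    have h3 : ‖(inner ℂ (J (Sm φ)) (J (Sl φ)) : ℂ)‖ ≤ ‖J (Sm φ)‖ * ‖J (Sl φ)‖ :=
      norm_inner_le_norm _ _
    have h4 := hCb φ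
    have h5 := hCs φ
    have h6 : ‖J (Sm φ)‖ * ‖J (Sl φ)‖
        ≤ (|C| * ‖(φ : G)‖) * ((1 + |lam + 1| * ‖R‖) * (|C| * ‖(φ : G)‖)) := by
      apply mul_le_mul h4 h5 (norm_nonneg _)
      positivity
    have h7 : (0:ℝ) ≤ |lam + 1| := abs_nonneg _
    calc |(((lam : ℂ) + 1) * (inner ℂ (J (Sm φ)) (J (Sl φ)) : ℂ)).re|
        ≤ |lam + 1| * ‖(inner ℂ (J (Sm φ)) (J (Sl φ)) : ℂ)‖ := by rw [← h2]; exact h1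
      _ ≤ |lam + 1| * ((|C| * ‖(φ : G)‖) * ((1 + |lam + 1| * ‖R‖) * (|C| * ‖(φ : G)‖))) := by
          exact mul_le_mul_of_nonneg_left (h3.trans h6) h7
      _ = ω * ‖(φ : G)‖ ^ 2 := by rw [hω]; ring
  have hΓbound : ∀ φ : (LinearMap.range (Γ : H1 →ₗ[ℂ] G) : Submodule ℂ G), ‖(φ : G)‖ ≤ ‖Γ‖ * ‖Sm φ‖ := by
    intro φ
    rw [← hSm2 φ]
    exact Γ.le_opNorm _
  refine ⟨ω, 1 + 2 * ω * ‖Γ‖ ^ 2, hω0, ?_, by positivity, ?_, ⟨-ω, ?_⟩, ?_⟩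
  · intro h; rw [hω, h]; norm_num
  · intro φ
    have hb := hbound φ
    have hre := hE φ
    have habs := abs_le.mp hb
    constructor
    · linarith [habs.1, habs.2]
    · have hg := hΓbound φ
      have hg2 : ‖(φ : G)‖ ^ 2 ≤ ‖Γ‖ ^ 2 * ‖Sm φ‖ ^ 2 := by
        have := mul_le_mul hg hg (norm_nonneg _) (by positivity)
        nlinarith
      nlinarith [habs.1, habs.2, hω0, norm_nonneg (Sm φ)]
  · intro φ
    have hb := hbound φ
    have hre := hE φ
    have habs := abs_le.mp hb
    nlinarith [sq_nonneg ‖Sm φ‖]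
  · intro φ ψ hCauchy htend
    obtain ⟨u, hu⟩ := cauchySeq_tendsto_of_complete hCauchy
    have hΓu : Γ u = ψ := by
      have h1 : Filter.Tendsto (fun n => Γ (Sm (φ n))) Filter.atTop (nhds (Γ u)) :=
        (Γ.continuous.tendsto u).comp hu
      have h2 : (fun n => Γ (Sm (φ n))) = fun n => ((φ n : G)) := by
        funext n; exact hSm2 (φ n)
      rw [h2] at h1
      exact tendsto_nhds_unique h1 htend
    have hψmem : ψ ∈ (LinearMap.range (Γ : H1 →ₗ[ℂ] G) : Submodule ℂ G) := ⟨u, hΓu⟩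
    refine ⟨⟨ψ, hψmem⟩, rfl, ?_⟩
    have huorth : u ∈ (LinearMap.ker (Γ : H1 →ₗ[ℂ] G) : Submodule ℂ H1)ᗮ := by
      have hcl : IsClosed ((LinearMap.ker (Γ : H1 →ₗ[ℂ] G) : Submodule ℂ H1)ᗮ : Set H1) :=
        Submodule.isClosed_orthogonal _
      exact hcl.mem_of_tendsto hu (Filter.Eventually.of_forall fun n => hSm1 (φ n))
    have heq : Sm ⟨ψ, hψmem⟩ = u := by
      set x := Sm ⟨ψ, hψmem⟩ - u with hx
      have hxker : x ∈ LinearMap.ker (Γ : H1 →ₗ[ℂ] G) := by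
        rw [LinearMap.mem_ker, hx, ContinuousLinearMap.coe_coe, map_sub, hSm2, hΓu, sub_self]
      have hxorth : x ∈ (LinearMap.ker (Γ : H1 →ₗ[ℂ] G) : Submodule ℂ H1)ᗮ :=
        Submodule.sub_mem _ (hSm1 ⟨ψ, hψmem⟩) huorth
      have h0 : (inner ℂ x x : ℂ) = 0 :=
        (Submodule.mem_orthogonal _ _).mp hxorth x hxker
      have : x = 0 := inner_self_eq_zero.mp h0
      rw [hx] at this
      exact sub_eq_zero.mp this
    rw [heq]
    exact hu
end
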